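/- arXiv:1104.1266 — 3 statements merged into one kernel-verified Lean document; each statement's English description precedes it below -/
import Mathlib

section
/- For every n ≥ 2 and θ > 0, the push-forward of the Ewens measure P^(n)_θ on S_n under the canonical projection p_{n−1,n} : S_n → S_{n−1} equals the Ewens measure P^(n−1)_θ on S_{n−1}; i.e., for every t ∈ S_{n−1}, ∑_{s ∈ S_n : p_{n−1,n}(s) = t} θ^{ℓ(s)}/(θ)_n = θ^{ℓ(t)}/(θ)_{n−1}, where (θ)_k = θ(θ+1)⋯(θ+k−1). -/
open Equiv Equiv.Perm Finset

/-- Number of cycles of a permutation, counting fixed points as cycles. -/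
def numCycles {n : ℕ} (s : Equiv.Perm (Fin n)) : ℕ :=
  s.cycleType.card + (n - s.cycleType.sum)

/-- The canonical projection `S_{n+1} → S_n`: delete the last point from its cycle. -/
def canonicalProjFun {n : ℕ} (s : Equiv.Perm (Fin (n + 1))) : Fin n → Fin n :=
  fun i =>
    if h : s i.castSucc = Fin.last n then
      (s (Fin.last n)).castPred (by
        intro he
        have : (i.castSucc : Fin (n + 1)) = Fin.last n := s.injective (h.trans he.symm)
        exact (Fin.castSucc_lt_last i).ne this)
    else
      (s i.castSucc).castPred h

section Key

lemma disjoint_cycleOf_mul_inv {m : ℕ} (s : Equiv.Perm (Fin m)) (x : Fin m) :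
    Equiv.Perm.Disjoint (s.cycleOf x) (s * (s.cycleOf x)⁻¹) := by
  intro y
  by_cases h : s.cycleOf x y = y
  · exact Or.inl h
  · right
    have hsc : s.SameCycle x y := by
      by_contra hc
      exact h (Equiv.Perm.cycleOf_apply_of_not_sameCycle hc)
    have h1 : (s.cycleOf x)⁻¹ y = s⁻¹ y := by
      rw [Equiv.Perm.cycleOf_inv]
      exact hsc.inv.cycleOf_apply
    simp [Equiv.Perm.mul_apply, h1]

lemma numCycles_swap_mul {m : ℕ} (s : Equiv.Perm (Fin m)) (x : Fin m) (hx : s x ≠ x) :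
    numCycles (Equiv.swap x (s x) * s) = numCycles s + 1 := by
  classical
  set c := s.cycleOf x with hc
  have hmem : c ∈ s.cycleFactorsFinset :=
    Equiv.Perm.cycleOf_mem_cycleFactorsFinset_iff.mpr (Equiv.Perm.mem_support.2 hx)
  have hcyc : c.IsCycle := Equiv.Perm.isCycle_cycleOf s hx
  have hcx : c x = s x := Equiv.Perm.cycleOf_apply_self s x
  set d := s * c⁻¹ with hd
  have hdisj : Equiv.Perm.Disjoint c d := disjoint_cycleOf_mul_inv s x
  have hcomm : c * s = s * c := (Equiv.Perm.self_mem_cycle_factors_commute hmem).eq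
  have hsd : c * d = s := by
    rw [hd, ← mul_assoc, hcomm, mul_assoc, mul_inv_cancel, mul_one]
  have hfd : d.cycleFactorsFinset = s.cycleFactorsFinset \ {c} :=
    Equiv.Perm.cycleFactorsFinset_mul_inv_mem_eq_sdiff hmem
  have hct : d.cycleType = s.cycleType.erase c.support.card := by
    rw [Equiv.Perm.cycleType_def, Equiv.Perm.cycleType_def, hfd,
      Finset.sdiff_singleton_eq_erase, Finset.erase_val,
      Multiset.map_erase_of_mem _ _ hmem]
    rfl
  have hmemct : c.support.card ∈ s.cycleType := by
    rw [Equiv.Perm.cycleType_def]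
    exact Multiset.mem_map_of_mem _ hmem
  have hcons : c.support.card ::ₘ s.cycleType.erase c.support.card = s.cycleType :=
    Multiset.cons_erase hmemct
  have hcardd : Multiset.card d.cycleType + 1 = Multiset.card s.cycleType := by
    rw [hct, ← hcons]; simp
  have hsumd : d.cycleType.sum + c.support.card = s.cycleType.sum := by
    conv_rhs => rw [← hcons]
    rw [hct]; simp [add_comm]
  have hcard2 : 2 ≤ c.support.card := hcyc.two_le_card_support
  have hcardsum : c.support.card ≤ s.cycleType.sum := Multiset.le_sum_of_mem hmemct
  have hsum : s.cycleType.sum ≤ m := by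
    rw [Equiv.Perm.sum_cycleType]
    simpa using s.support.card_le_univ
  by_cases h2 : s (s x) = x
  · have hcc : c (c x) = x := by
      rw [hcx]
      have : s.SameCycle x (s x) := ⟨1, by simp⟩
      rw [hc, this.cycleOf_apply, h2]
    have hswap : c = Equiv.swap x (s x) := by
      have := hcyc.eq_swap_of_apply_apply_eq_self (by rw [hcx]; exact hx) hcc
      rwa [hcx] at this
    have hcinv : c⁻¹ = c := by rw [hswap]; exact Equiv.swap_inv x (s x)
    have hmul : Equiv.swap x (s x) * s = d := by
      rw [← hswap, hcomm, hd, hcinv]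
    have hc2 : c.support.card = 2 := by
      rw [hswap]; exact Equiv.Perm.card_support_swap (Ne.symm hx)
    rw [hmul]
    unfold numCycles
    omega
  · have hcc : c (c x) ≠ x := by
      rw [hcx]
      have : s.SameCycle x (s x) := ⟨1, by simp⟩
      rw [hc, this.cycleOf_apply]
      exact h2
    set e := Equiv.swap x (c x) * c with he
    have hecyc : e.IsCycle := hcyc.swap_mul (by rw [hcx]; exact hx) hcc
    have hesupp : e.support = c.support \ {x} := Equiv.Perm.support_swap_mul_eq c x hcc
    have hxc : x ∈ c.support := Equiv.Perm.mem_support.2 (by rw [hcx]; exact hx)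
    have hecard : e.support.card + 1 = c.support.card := by
      rw [hesupp, Finset.card_sdiff_of_subset (Finset.singleton_subset_iff.2 hxc),
        Finset.card_singleton]
      omega
    have hsub : e.support ⊆ c.support := by
      rw [hesupp]; exact Finset.sdiff_subset
    have hed : e.Disjoint d := by
      intro y
      by_cases hy : e y = y
      · exact Or.inl hy
      · refine Or.inr ?_
        have hyc : y ∈ c.support := hsub (Equiv.Perm.mem_support.2 hy)
        rcases hdisj y with h | h
        · exact absurd h (Equiv.Perm.mem_support.1 hyc)
        · exact h
    have hmul : Equiv.swap x (s x) * s = e * d := by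
      rw [he, hcx, mul_assoc, hsd]
    have hctmul : (Equiv.swap x (s x) * s).cycleType = e.support.card ::ₘ d.cycleType := by
      rw [hmul, Equiv.Perm.Disjoint.cycleType_mul hed, hecyc.cycleType]
      simp [Multiset.singleton_add]
    unfold numCycles
    rw [hctmul]
    simp only [Multiset.card_cons, Multiset.sum_cons]
    omega

end Key

section Ext

variable {n : ℕ}

/-- The equivalence between `Fin n` and the non-last elements of `Fin (n+1)`. -/
def lastEquiv (n : ℕ) : Fin n ≃ {i : Fin (n + 1) // (i : ℕ) < n} where
  toFun i := ⟨i.castSucc, by simp⟩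
  invFun i := ⟨i.1.1, i.2⟩
  left_inv i := rfl
  right_inv i := by
    ext
    simp [Fin.castSucc, Fin.castAdd, Fin.castLE]

/-- Extension of a permutation of `Fin n` to `Fin (n+1)` fixing the last point. -/
def extLast (t : Equiv.Perm (Fin n)) : Equiv.Perm (Fin (n + 1)) :=
  t.extendDomain (lastEquiv n)

lemma extLast_castSucc (t : Equiv.Perm (Fin n)) (i : Fin n) :
    extLast t i.castSucc = (t i).castSucc := by
  have h : ((i.castSucc : Fin (n + 1)) : ℕ) < n := by simp
  calc extLast t i.castSucc = (lastEquiv n) (t ((lastEquiv n).symm ⟨i.castSucc, h⟩)) :=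
        t.extendDomain_apply_subtype (lastEquiv n) h
    _ = (t i).castSucc := rfl

lemma extLast_last (t : Equiv.Perm (Fin n)) : extLast t (Fin.last n) = Fin.last n := by
  refine t.extendDomain_apply_not_subtype (lastEquiv n) ?_
  simp

lemma cycleType_sum_le (t : Equiv.Perm (Fin n)) : t.cycleType.sum ≤ n := by
  rw [Equiv.Perm.sum_cycleType]
  simpa using t.support.card_le_univ

lemma numCycles_extLast (t : Equiv.Perm (Fin n)) :
    numCycles (extLast t) = numCycles t + 1 := by
  have h := cycleType_sum_le t
  unfold numCycles
  rw [extLast, Equiv.Perm.cycleType_extendDomain]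
  omega

end Ext

section Main

variable {n : ℕ} (t : Equiv.Perm (Fin n))

/-- The insertion map: fiber of the canonical projection over `t`. -/
def insertPerm (t : Equiv.Perm (Fin n)) (a : Fin (n + 1)) : Equiv.Perm (Fin (n + 1)) :=
  Equiv.swap (Fin.last n) a * extLast t

lemma insertPerm_last (a : Fin (n + 1)) : insertPerm t a (Fin.last n) = a := by
  rw [insertPerm, Equiv.Perm.mul_apply, extLast_last, Equiv.swap_apply_left]

lemma insertPerm_injective : Function.Injective (insertPerm t) := by
  intro a b h
  have := congrArg (fun s : Equiv.Perm (Fin (n + 1)) => s (Fin.last n)) h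
  simpa [insertPerm_last] using this

lemma proj_insertPerm (a : Fin (n + 1)) : canonicalProjFun (insertPerm t a) = ⇑t := by
  funext i
  have hlt : (i.castSucc : Fin (n + 1)) ≠ Fin.last n := (Fin.castSucc_lt_last i).ne
  have happ : insertPerm t a i.castSucc = Equiv.swap (Fin.last n) a (t i).castSucc := by
    rw [insertPerm, Equiv.Perm.mul_apply, extLast_castSucc]
  by_cases ha : a = Fin.last n
  · subst ha
    have h1 : insertPerm t (Fin.last n) i.castSucc = (t i).castSucc := by
      rw [happ, Equiv.swap_self]; rfl
    rw [canonicalProjFun, dif_neg (by rw [h1]; exact (Fin.castSucc_lt_last (t i)).ne)]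
    simp [h1]
  · by_cases hti : (t i).castSucc = a
    · have h1 : insertPerm t a i.castSucc = Fin.last n := by
        rw [happ, hti, Equiv.swap_apply_right]
      rw [canonicalProjFun, dif_pos h1]
      have h2 : insertPerm t a (Fin.last n) = a := insertPerm_last t a
      simp only [h2]
      exact Fin.castSucc_injective n (by rw [Fin.castSucc_castPred, hti])
    · have h1 : insertPerm t a i.castSucc = (t i).castSucc := by
        rw [happ, Equiv.swap_apply_of_ne_of_ne (Fin.castSucc_lt_last (t i)).ne hti]
      rw [canonicalProjFun, dif_neg (by rw [h1]; exact (Fin.castSucc_lt_last (t i)).ne)]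
      simp [h1]

lemma fiber_eq_image :
    Finset.univ.filter (fun s : Equiv.Perm (Fin (n + 1)) => canonicalProjFun s = ⇑t)
      = Finset.image (insertPerm t) Finset.univ := by
  ext s
  simp only [Finset.mem_filter, Finset.mem_univ, true_and, Finset.mem_image]
  constructor
  · intro hs
    refine ⟨s (Fin.last n), ?_⟩
    ext y
    induction y using Fin.lastCases with
    | last => rw [insertPerm_last]
    | cast i =>
      have ht := congrFun hs i
      rw [canonicalProjFun] at ht
      have happ : insertPerm t (s (Fin.last n)) i.castSucc
          = Equiv.swap (Fin.last n) (s (Fin.last n)) (t i).castSucc := by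
        rw [insertPerm, Equiv.Perm.mul_apply, extLast_castSucc]
      by_cases h : s i.castSucc = Fin.last n
      · rw [dif_pos h] at ht
        have h2 : (t i).castSucc = s (Fin.last n) := by rw [← ht, Fin.castSucc_castPred]
        rw [happ, h2, Equiv.swap_apply_right, h]
      · rw [dif_neg h] at ht
        have h2 : (t i).castSucc = s i.castSucc := by rw [← ht, Fin.castSucc_castPred]
        have h3 : s i.castSucc ≠ s (Fin.last n) :=
          fun he => (Fin.castSucc_lt_last i).ne (s.injective he)
        rw [happ, h2, Equiv.swap_apply_of_ne_of_ne h h3]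
  · rintro ⟨a, rfl⟩
    exact proj_insertPerm t a

lemma numCycles_insertPerm_castSucc (b : Fin n) :
    numCycles (insertPerm t b.castSucc) = numCycles t := by
  set s := insertPerm t b.castSucc with hs
  have hslast : s (Fin.last n) = b.castSucc := insertPerm_last t b.castSucc
  have hne : s (Fin.last n) ≠ Fin.last n := by
    rw [hslast]; exact (Fin.castSucc_lt_last b).ne
  have hkey := numCycles_swap_mul s (Fin.last n) hne
  have hback : Equiv.swap (Fin.last n) (s (Fin.last n)) * s = extLast t := by
    rw [hslast, hs, insertPerm, ← mul_assoc, Equiv.swap_mul_self, one_mul]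
  rw [hback, numCycles_extLast] at hkey
  omega

lemma numCycles_insertPerm_last :
    numCycles (insertPerm t (Fin.last n)) = numCycles t + 1 := by
  have h : insertPerm t (Fin.last n) = extLast t := by
    rw [insertPerm, Equiv.swap_self]
    ext y
    simp
  rw [h, numCycles_extLast]

end Main

/-- The push-forward of the Ewens measure on `S_{n+1}` under the canonical
projection is the Ewens measure on `S_n`. -/
theorem ewens_pushforward_canonicalProj (n : ℕ) (hn : 1 ≤ n) (θ : ℝ) (hθ : 0 < θ)
    (t : Equiv.Perm (Fin n)) :
    ∑ s ∈ Finset.univ.filter (fun s : Equiv.Perm (Fin (n + 1)) => canonicalProjFun s = ⇑t),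
        θ ^ numCycles s / ∏ i ∈ Finset.range (n + 1), (θ + i)
      = θ ^ numCycles t / ∏ i ∈ Finset.range n, (θ + i) := by
  classical
  rw [fiber_eq_image t, Finset.sum_image (fun a _ b _ h => insertPerm_injective t h)]
  rw [Fin.sum_univ_castSucc]
  have hP : (0 : ℝ) < ∏ i ∈ Finset.range n, (θ + i) :=
    Finset.prod_pos fun i _ => by positivity
  have hD : ∏ i ∈ Finset.range (n + 1), (θ + i)
      = (∏ i ∈ Finset.range n, (θ + i)) * (θ + n) := by
    rw [Finset.prod_range_succ]
  have hcast : ∀ i : Fin n, θ ^ numCycles (insertPerm t i.castSucc)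
      / ∏ j ∈ Finset.range (n + 1), (θ + j)
      = θ ^ numCycles t / ∏ j ∈ Finset.range (n + 1), (θ + j) := by
    intro i
    rw [numCycles_insertPerm_castSucc]
  rw [Finset.sum_congr rfl fun i _ => hcast i, Finset.sum_const, Finset.card_univ,
    Fintype.card_fin, numCycles_insertPerm_last, hD]
  have hθn : (0 : ℝ) < θ + n := by positivity
  rw [nsmul_eq_mul]
  field_simp
  ring
end

section
/- The Ewens sampling formula defines a probability measure on partitions of n: for every θ > 0 and n ≥ 1, ∑_{ρ ⊢ n} θ^{ℓ(ρ)} / ((θ)_n) · ∏_k 1/(k^{m_k} m_k!) · n! = 1, where ℓ(ρ) is the number of parts of ρ, m_k the multiplicity of k in ρ, and (θ)_n = θ(θ+1)⋯(θ+n−1). -/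
open Finset

/-- The "z" normalizer: `∏_{k=1}^N k^{m_k} m_k!` for a multiset of parts. -/
noncomputable def ewZ (N : ℕ) (s : Multiset ℕ) : ℝ :=
  ∏ k ∈ Finset.Icc 1 N, ((k : ℝ) ^ (s.count k) * (s.count k).factorial)

lemma ewZ_pos (N : ℕ) (s : Multiset ℕ) : 0 < ewZ N s := by
  refine Finset.prod_pos fun k hk => ?_
  have hk1 : 1 ≤ k := (Finset.mem_Icc.mp hk).1
  positivity

lemma ewZ_erase (N : ℕ) (s : Multiset ℕ) (k : ℕ) (hk : k ∈ Finset.Icc 1 N)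
    (hks : k ∈ s) :
    ewZ N s = ewZ N (s.erase k) * ((k : ℝ) * s.count k) := by
  unfold ewZ
  rw [← Finset.prod_erase_mul _ _ hk, ← Finset.prod_erase_mul _ _ hk]
  have h1 : ∀ j ∈ (Finset.Icc 1 N).erase k,
      ((j : ℝ) ^ (s.count j) * (s.count j).factorial)
        = ((j : ℝ) ^ ((s.erase k).count j) * ((s.erase k).count j).factorial) := by
    intro j hj
    rw [Multiset.count_erase_of_ne (Finset.ne_of_mem_erase hj)]
  rw [Finset.prod_congr rfl h1]
  have hc : 1 ≤ s.count k := Multiset.one_le_count_iff_mem.mpr hks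
  rw [Multiset.count_erase_self]
  ring_nf
  obtain ⟨c, hc'⟩ : ∃ c, s.count k = c + 1 := ⟨s.count k - 1, by omega⟩
  rw [hc']
  simp [Nat.factorial_succ, pow_succ]
  ring

noncomputable def ewP (θ : ℝ) (N m : ℕ) : ℝ :=
  ∑ ρ : Nat.Partition m, θ ^ (Multiset.card ρ.parts) / ewZ N ρ.parts

lemma ewP_zero (θ : ℝ) (N : ℕ) : ewP θ N 0 = 1 := by
  rw [ewP, Finset.univ_unique, Finset.sum_singleton]
  simp [ewZ]

lemma parts_sum_eq (m : ℕ) (ρ : Nat.Partition m) :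
    ∑ k ∈ Finset.Icc 1 m, ρ.parts.count k * k = m := by
  have h := Finset.sum_multiset_map_count ρ.parts (id : ℕ → ℕ)
  rw [Multiset.map_id] at h
  conv_rhs => rw [← ρ.parts_sum]
  rw [h]
  simp only [smul_eq_mul, id]
  refine (Finset.sum_subset ?_ ?_).symm
  · intro k hk
    rw [Multiset.mem_toFinset] at hk
    refine Finset.mem_Icc.mpr ⟨ρ.parts_pos hk, ?_⟩
    exact (Multiset.le_sum_of_mem hk).trans_eq ρ.parts_sum
  · intro k _ hk
    rw [Multiset.mem_toFinset] at hk
    simp [Multiset.count_eq_zero_of_notMem hk]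

lemma ewErase_sum (m k : ℕ) (ρ : Nat.Partition m) (h : k ∈ ρ.parts) :
    (ρ.parts.erase k).sum = m - k := by
  have := Multiset.cons_erase h
  have h2 : (k ::ₘ ρ.parts.erase k).sum = m := by rw [this, ρ.parts_sum]
  rw [Multiset.sum_cons] at h2
  omega

lemma ewInner (θ : ℝ) (hθ : 0 < θ) (N m k : ℕ) (hmN : m ≤ N) (hk : k ∈ Finset.Icc 1 m) :
    ∑ ρ : Nat.Partition m, ((k : ℝ) * ρ.parts.count k) *
        (θ ^ (Multiset.card ρ.parts) / ewZ N ρ.parts)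
      = θ * ewP θ N (m - k) := by
  obtain ⟨hk1, hkm⟩ := Finset.mem_Icc.mp hk
  have hkN : k ∈ Finset.Icc 1 N := Finset.mem_Icc.mpr ⟨hk1, hkm.trans hmN⟩
  rw [ewP, Finset.mul_sum]
  rw [← Finset.sum_filter_of_ne (p := fun ρ : Nat.Partition m => k ∈ ρ.parts) ?filt]
  case filt =>
    intro ρ _ hne
    by_contra hmem
    exact hne (by simp [Multiset.count_eq_zero_of_notMem hmem])
  refine Finset.sum_bij'
    (i := fun ρ hρ => (⟨ρ.parts.erase k,
      fun hi => ρ.parts_pos (Multiset.mem_of_mem_erase hi),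
      ewErase_sum m k ρ (by simpa using hρ)⟩ : Nat.Partition (m - k)))
    (j := fun ρ' _ => (⟨k ::ₘ ρ'.parts,
      fun hi => by rcases Multiset.mem_cons.mp hi with h | h
                   · omega
                   · exact ρ'.parts_pos h,
      by rw [Multiset.sum_cons, ρ'.parts_sum]; omega⟩ : Nat.Partition m))
    (fun ρ hρ => Finset.mem_univ _)
    (fun ρ' _ => by simp)
    (fun ρ hρ => by
      ext1
      exact Multiset.cons_erase (by simpa using hρ))
    (fun ρ' _ => by
      ext1
      exact Multiset.erase_cons_head _ _)
    ?_
  intro ρ hρ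
  have hmem : k ∈ ρ.parts := by simpa using hρ
  have hc : 1 ≤ ρ.parts.count k := Multiset.one_le_count_iff_mem.mpr hmem
  have hcard : 1 ≤ Multiset.card ρ.parts := by
    have := Multiset.card_pos_iff_exists_mem.mpr ⟨k, hmem⟩
    omega
  simp only
  rw [ewZ_erase N ρ.parts k hkN hmem]
  rw [Multiset.card_erase_of_mem hmem]
  have h1 : Multiset.card ρ.parts = (Multiset.card ρ.parts - 1) + 1 := by omega
  rw [h1, pow_succ]
  have hz : ewZ N (ρ.parts.erase k) ≠ 0 := (ewZ_pos N _).ne'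
  have hkc : (k : ℝ) * ρ.parts.count k ≠ 0 := by
    have : (0:ℝ) < (k : ℝ) * ρ.parts.count k := by positivity
    exact this.ne'
  field_simp
  ring_nf
  congr 1
  rw [Nat.pred_eq_sub_one]
  omega

lemma ewRec (θ : ℝ) (hθ : 0 < θ) (N m : ℕ) (hm : 1 ≤ m) (hmN : m ≤ N) :
    (m : ℝ) * ewP θ N m = θ * ∑ k ∈ Finset.Icc 1 m, ewP θ N (m - k) := by
  rw [ewP, Finset.mul_sum]
  have step : ∀ ρ : Nat.Partition m,
      (m : ℝ) * (θ ^ (Multiset.card ρ.parts) / ewZ N ρ.parts)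
        = ∑ k ∈ Finset.Icc 1 m, ((k : ℝ) * ρ.parts.count k) *
            (θ ^ (Multiset.card ρ.parts) / ewZ N ρ.parts) := by
    intro ρ
    rw [← Finset.sum_mul]
    congr 1
    have h0 := parts_sum_eq m ρ
    have : ((∑ k ∈ Finset.Icc 1 m, ρ.parts.count k * k : ℕ) : ℝ) = (m : ℝ) := by
      exact_mod_cast congrArg (Nat.cast : ℕ → ℝ) h0
    push_cast at this
    rw [← this]
    apply Finset.sum_congr rfl
    intro k _
    ring
  rw [Finset.sum_congr rfl fun ρ _ => step ρ, Finset.sum_comm]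
  rw [Finset.sum_congr rfl fun k hk => ewInner θ hθ N m k hmN hk, Finset.mul_sum]

lemma ewQ_id (θ : ℝ) (hθ : 0 < θ) : ∀ m : ℕ, 1 ≤ m →
    θ * ∑ j ∈ Finset.range m, (∏ i ∈ Finset.range j, (θ + i)) / j.factorial
      = (∏ i ∈ Finset.range m, (θ + i)) / (m - 1).factorial := by
  intro m
  induction m with
  | zero => intro h; omega
  | succ m ih =>
    intro _
    rcases Nat.eq_zero_or_pos m with hm | hm
    · subst hm; simp
    · rw [Finset.sum_range_succ, mul_add, ih hm, Finset.prod_range_succ,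
        Nat.add_sub_cancel]
      have hfac : (m.factorial : ℝ) = m * (m - 1).factorial := by
        exact_mod_cast (Nat.mul_factorial_pred hm.ne').symm
      have hm0 : (m : ℝ) ≠ 0 := by exact_mod_cast hm.ne'
      have hf1 : ((m - 1).factorial : ℝ) ≠ 0 := by
        exact_mod_cast (Nat.factorial_pos _).ne'
      have hf2 : (m.factorial : ℝ) ≠ 0 := by
        exact_mod_cast (Nat.factorial_pos _).ne'
      field_simp [hfac]
      rw [hfac]
      ring

lemma ewMain (θ : ℝ) (hθ : 0 < θ) (N : ℕ) : ∀ m : ℕ, m ≤ N →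
    ewP θ N m = (∏ i ∈ Finset.range m, (θ + i)) / m.factorial := by
  intro m
  induction m using Nat.strong_induction_on with
  | _ m ih =>
    intro hmN
    rcases Nat.eq_zero_or_pos m with hm | hm
    · subst hm; simp [ewP_zero]
    · have hrec := ewRec θ hθ N m hm hmN
      have hre : ∑ k ∈ Finset.Icc 1 m, ewP θ N (m - k)
          = ∑ j ∈ Finset.range m, ewP θ N j := by
        refine Finset.sum_bij' (i := fun k _ => m - k) (j := fun j _ => m - j)
          ?_ ?_ ?_ ?_ ?_
        · intro k hk; rw [Finset.mem_Icc] at hk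
          show m - k ∈ Finset.range m; rw [Finset.mem_range]; omega
        · intro j hj; rw [Finset.mem_range] at hj
          show m - j ∈ Finset.Icc 1 m; rw [Finset.mem_Icc]; omega
        · intro k hk; rw [Finset.mem_Icc] at hk; show m - (m - k) = k; omega
        · intro j hj; rw [Finset.mem_range] at hj; show m - (m - j) = j; omega
        · intro k _; rfl
      rw [hre] at hrec
      have hIH : ∀ j ∈ Finset.range m, ewP θ N j
          = (∏ i ∈ Finset.range j, (θ + i)) / j.factorial := by
        intro j hj
        rw [Finset.mem_range] at hj
        exact ih j hj (le_trans (le_of_lt hj) hmN)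
      rw [Finset.sum_congr rfl hIH, ewQ_id θ hθ m hm] at hrec
      have hm0 : (m : ℝ) ≠ 0 := by exact_mod_cast hm.ne'
      have hfac : (m.factorial : ℝ) = m * (m - 1).factorial := by
        exact_mod_cast (Nat.mul_factorial_pred hm.ne').symm
      have hf1 : ((m - 1).factorial : ℝ) ≠ 0 := by
        exact_mod_cast (Nat.factorial_pos _).ne'
      rw [hfac]
      rw [eq_div_iff (mul_ne_zero hm0 hf1)]
      rw [eq_div_iff hf1] at hrec
      linear_combination hrec

/-- The Ewens sampling formula defines a probability measure on the set of
partitions of `n`. -/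
theorem ewens_sampling_formula_sums_to_one (n : ℕ) (hn : 1 ≤ n) (θ : ℝ) (hθ : 0 < θ) :
    ∑ ρ : Nat.Partition n,
        θ ^ (Multiset.card ρ.parts) / (∏ i ∈ Finset.range n, (θ + i))
          * (∏ k ∈ Finset.Icc 1 n,
              (1 : ℝ) / ((k : ℝ) ^ (ρ.parts.count k) * (ρ.parts.count k).factorial))
          * n.factorial
      = 1 := by
  have hQ : 0 < ∏ i ∈ Finset.range n, (θ + (i : ℝ)) := by
    refine Finset.prod_pos fun i _ => by positivity
  have key := ewMain θ hθ n n le_rfl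
  have hterm : ∀ ρ : Nat.Partition n,
      θ ^ (Multiset.card ρ.parts) / (∏ i ∈ Finset.range n, (θ + i))
          * (∏ k ∈ Finset.Icc 1 n,
              (1 : ℝ) / ((k : ℝ) ^ (ρ.parts.count k) * (ρ.parts.count k).factorial))
          * n.factorial
        = (θ ^ (Multiset.card ρ.parts) / ewZ n ρ.parts) *
            (n.factorial / (∏ i ∈ Finset.range n, (θ + i))) := by
    intro ρ
    rw [Finset.prod_div_distrib, Finset.prod_const_one, ← ewZ]
    have hz : ewZ n ρ.parts ≠ 0 := (ewZ_pos n _).ne'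
    field_simp
  rw [Finset.sum_congr rfl fun ρ _ => hterm ρ, ← Finset.sum_mul, ← ewP, key]
  have hf : (n.factorial : ℝ) ≠ 0 := by exact_mod_cast (Nat.factorial_pos _).ne'
  field_simp
end

section
/- The identity ∑_{λ ⊢ n} (z)_λ (z′)_λ (dim λ)² = (zz′)_n · n! holds for all complex z, z′ and all n ≥ 1, where (x)_λ = ∏_{(i,j)∈λ} (x + j − i) is the product over boxes of λ of the shifted contents, (x)_n = x(x+1)⋯(x+n−1), and dim λ is the number of standard Young tableaux of shape λ. -/
set_option maxHeartbeats 1000000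


/-- The `i`-th largest part of a partition (0-indexed), with value 0 beyond
the number of parts. -/
def partFun {n : ℕ} (ρ : Nat.Partition n) : ℕ → ℕ :=
  fun i => (ρ.parts.sort (· ≥ ·)).getD i 0

/-- The set of cells (boxes) of the Young diagram of a partition of `n`,
with 0-indexed coordinates `(i, j)`: row `i`, column `j < λ_i`. -/
def cellsOf {n : ℕ} (ρ : Nat.Partition n) : Finset (ℕ × ℕ) :=
  (Finset.range n ×ˢ Finset.range n).filter (fun c => c.2 < partFun ρ c.1)

/-- The number of standard Young tableaux on a given finite set of cells:
bijective fillings by `0, …, |c|−1` that strictly increase along rows and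
down columns (equivalently, strictly increase with the componentwise order). -/
def dimCells (c : Finset (ℕ × ℕ)) : ℕ :=
  Finset.card (Finset.univ.filter (fun T : c → Fin c.card =>
    Function.Bijective T ∧ ∀ a b : c, (a : ℕ × ℕ).1 ≤ (b : ℕ × ℕ).1 →
      (a : ℕ × ℕ).2 ≤ (b : ℕ × ℕ).2 → a ≠ b → T a < T b))

/-- `dim λ`: the number of standard Young tableaux of shape `λ`. -/
def dimP {n : ℕ} (ρ : Nat.Partition n) : ℕ := dimCells (cellsOf ρ)


/-- The generalized Pochhammer symbol `(x)_λ = ∏_{(i,j)∈λ} (x + j − i)`,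
product over the boxes of the Young diagram of `λ` (contents are the same in
0-indexed coordinates). -/
def pochPartition {n : ℕ} (x : ℂ) (ρ : Nat.Partition n) : ℂ :=
  ∏ c ∈ cellsOf ρ, (x + (c.2 : ℂ) - (c.1 : ℂ))


open Finset

/-- content of a cell -/
def cont (c : ℕ × ℕ) : ℤ := (c.2 : ℤ) - (c.1 : ℤ)

/-- maximal cells of a finite set of cells -/
def maxC (S : Finset (ℕ × ℕ)) : Finset (ℕ × ℕ) :=
  S.filter (fun a => ∀ b ∈ S, a ≤ b → b = a)

open Classical in
/-- addable cells -/
noncomputable def addC (S : Finset (ℕ × ℕ)) : Finset (ℕ × ℕ) :=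
  (Finset.range (S.card + 1) ×ˢ Finset.range (S.card + 1)).filter
    (fun c => c ∉ S ∧ IsLowerSet (↑(insert c S) : Set (ℕ × ℕ)))

lemma mem_maxC {S : Finset (ℕ × ℕ)} {a : ℕ × ℕ} :
    a ∈ maxC S ↔ a ∈ S ∧ ∀ b ∈ S, a ≤ b → b = a := by
  simp [maxC]

lemma addable_bound {S : Finset (ℕ × ℕ)} {c : ℕ × ℕ} (hc : c ∉ S)
    (hl : IsLowerSet (↑(insert c S) : Set (ℕ × ℕ))) :
    c.1 ≤ S.card ∧ c.2 ≤ S.card := by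
  constructor
  · have hsub : (Finset.range c.1).image (fun i => (i, c.2)) ⊆ S := by
      intro x hx
      simp only [Finset.mem_image, Finset.mem_range] at hx
      obtain ⟨i, hi, rfl⟩ := hx
      have hxle : (i, c.2) ≤ c := ⟨le_of_lt hi, le_rfl⟩
      have := hl hxle (by simp)
      simp only [Finset.coe_insert, Set.mem_insert_iff, Finset.mem_coe] at this
      rcases this with h | h
      · exfalso; exact absurd (congrArg Prod.fst h) (Nat.ne_of_lt hi)
      · exact h
    have := Finset.card_le_card hsub
    rwa [Finset.card_image_of_injective _ (fun a b hab => by simpa using congrArg Prod.fst hab),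
      Finset.card_range] at this
  · have hsub : (Finset.range c.2).image (fun j => (c.1, j)) ⊆ S := by
      intro x hx
      simp only [Finset.mem_image, Finset.mem_range] at hx
      obtain ⟨j, hj, rfl⟩ := hx
      have hxle : (c.1, j) ≤ c := ⟨le_rfl, le_of_lt hj⟩
      have := hl hxle (by simp)
      simp only [Finset.coe_insert, Set.mem_insert_iff, Finset.mem_coe] at this
      rcases this with h | h
      · exfalso; exact absurd (congrArg Prod.snd h) (Nat.ne_of_lt hj)
      · exact h
    have := Finset.card_le_card hsub
    rwa [Finset.card_image_of_injective _ (fun a b hab => by simpa using congrArg Prod.snd hab),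
      Finset.card_range] at this

lemma mem_addC {S : Finset (ℕ × ℕ)} {c : ℕ × ℕ} :
    c ∈ addC S ↔ c ∉ S ∧ IsLowerSet (↑(insert c S) : Set (ℕ × ℕ)) := by
  classical
  simp only [addC, Finset.mem_filter, Finset.mem_product, Finset.mem_range]
  constructor
  · exact fun h => h.2
  · intro h
    have hb := addable_bound h.1 h.2
    exact ⟨⟨Nat.lt_succ_of_le hb.1, Nat.lt_succ_of_le hb.2⟩, h⟩

/-- erasing a maximal cell of a lower set yields a lower set -/
lemma lower_erase {S : Finset (ℕ × ℕ)} (hS : IsLowerSet (↑S : Set (ℕ × ℕ)))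
    {r : ℕ × ℕ} (hr : r ∈ maxC S) :
    IsLowerSet (↑(S.erase r) : Set (ℕ × ℕ)) := by
  rw [mem_maxC] at hr
  intro x y hyx hx
  simp only [Finset.coe_erase, Set.mem_diff, Finset.mem_coe, Set.mem_singleton_iff] at hx ⊢
  refine ⟨hS hyx hx.1, ?_⟩
  rintro rfl
  exact hx.2 (hr.2 x hx.1 hyx)

/-- a cell addable to `S` is maximal in `insert c S` -/
lemma addable_mem_maxC_insert {S : Finset (ℕ × ℕ)} (hS : IsLowerSet (↑S : Set (ℕ × ℕ)))
    {c : ℕ × ℕ} (hc : c ∈ addC S) : c ∈ maxC (insert c S) := by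
  rw [mem_addC] at hc
  rw [mem_maxC]
  refine ⟨Finset.mem_insert_self _ _, ?_⟩
  intro b hb hcb
  rcases Finset.mem_insert.1 hb with rfl | hb
  · rfl
  · exact absurd (hS hcb hb) hc.1

/-- a maximal cell in a superset is maximal in the subset -/
lemma maxC_mono {S T : Finset (ℕ × ℕ)} (hST : S ⊆ T) {r : ℕ × ℕ} (hr : r ∈ maxC T)
    (hrS : r ∈ S) : r ∈ maxC S := by
  rw [mem_maxC] at hr ⊢
  exact ⟨hrS, fun b hb => hr.2 b (hST hb)⟩

lemma addC_empty : addC (∅ : Finset (ℕ × ℕ)) = {(0,0)} := by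
  ext c
  rw [mem_addC]
  simp only [Finset.notMem_empty, not_false_iff, true_and, Finset.mem_singleton]
  constructor
  · intro h
    have h1 : ((0,0) : ℕ × ℕ) ≤ c := ⟨Nat.zero_le _, Nat.zero_le _⟩
    have := h h1 (by simp)
    have h2 : ((0,0) : ℕ × ℕ) = c := by simpa using this
    exact h2.symm
  · rintro rfl
    intro x y hyx hx
    simp only [Finset.insert_empty, Finset.coe_singleton, Set.mem_singleton_iff] at hx ⊢
    subst hx
    exact Prod.ext (Nat.le_zero.mp hyx.1) (Nat.le_zero.mp hyx.2)
lemma dim_empty : dimCells ∅ = 1 := by decide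

lemma dim_singleton : dimCells {((0,0) : ℕ × ℕ)} = 1 := by decide

section Branch

variable {S : Finset (ℕ × ℕ)}

/-- the SYT property -/
def SYTp (S : Finset (ℕ × ℕ)) (T : ↥S → Fin S.card) : Prop :=
  Function.Bijective T ∧ ∀ a b : ↥S, (a : ℕ × ℕ).1 ≤ (b : ℕ × ℕ).1 →
      (a : ℕ × ℕ).2 ≤ (b : ℕ × ℕ).2 → a ≠ b → T a < T b

open Classical in
lemma dimCells_eq (S : Finset (ℕ × ℕ)) :
    dimCells S = (Finset.univ.filter (fun T => SYTp S T)).card := by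
  unfold dimCells SYTp
  congr

lemma SYTp_iff (S : Finset (ℕ × ℕ)) (T : ↥S → Fin S.card) :
    SYTp S T ↔ Function.Bijective T ∧ ∀ a b : ↥S, (a:ℕ×ℕ) ≤ (b:ℕ×ℕ) → a ≠ b → T a < T b := by
  constructor
  · exact fun h => ⟨h.1, fun a b hab => h.2 a b hab.1 hab.2⟩
  · exact fun h => ⟨h.1, fun a b h1 h2 => h.2 a b ⟨h1, h2⟩⟩

open Classical in
/-- the location of the top entry of a filling -/
noncomputable def topCell (S : Finset (ℕ × ℕ)) (T : ↥S → Fin S.card) : ℕ × ℕ :=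
  if h : ∃ a : ↥S, (T a : ℕ) = S.card - 1 then (Classical.choose h : ↥S).1 else (0,0)

lemma topCell_spec {T : ↥S → Fin S.card} (hT : Function.Surjective T) (hS : S.Nonempty) :
    topCell S T ∈ S ∧ ∃ h : topCell S T ∈ S, (T ⟨_, h⟩ : ℕ) = S.card - 1 := by
  have hcard : 0 < S.card := Finset.card_pos.2 hS
  obtain ⟨a, ha⟩ := hT ⟨S.card - 1, by omega⟩
  have hex : ∃ a : ↥S, (T a : ℕ) = S.card - 1 := ⟨a, by rw [ha]⟩
  have hspec := Classical.choose_spec hex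
  have : topCell S T = (Classical.choose hex : ↥S).1 := by
    rw [topCell, dif_pos hex]
  rw [this]
  refine ⟨(Classical.choose hex).2, (Classical.choose hex).2, ?_⟩
  convert hspec using 2

lemma topCell_eq {T : ↥S → Fin S.card} (hT : Function.Injective T) {a : ↥S}
    (ha : (T a : ℕ) = S.card - 1) : topCell S T = a.1 := by
  have hex : ∃ x : ↥S, (T x : ℕ) = S.card - 1 := ⟨a, ha⟩
  have hspec := Classical.choose_spec hex
  have h1 : topCell S T = (Classical.choose hex : ↥S).1 := by
    rw [topCell, dif_pos hex]
  have : Classical.choose hex = a := hT (Fin.ext (by rw [hspec, ha]))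
  rw [h1, this]

/-- top entry sits at a maximal cell -/
lemma topCell_mem_maxC {T : ↥S → Fin S.card} (hT : SYTp S T) (hS : S.Nonempty) :
    topCell S T ∈ maxC S := by
  obtain ⟨hmem, hmem', htop⟩ := topCell_spec hT.1.2 hS
  rw [mem_maxC]
  refine ⟨hmem, ?_⟩
  intro b hb hle
  by_contra hne
  have hne' : (⟨topCell S T, hmem'⟩ : ↥S) ≠ ⟨b, hb⟩ := by
    intro h; exact hne (congrArg Subtype.val h).symm
  have := hT.2 _ _ hle.1 hle.2 hne'
  have hlt : (T ⟨topCell S T, hmem'⟩ : ℕ) < (T ⟨b, hb⟩ : ℕ) := this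
  have : (T ⟨b, hb⟩ : ℕ) < S.card := (T ⟨b, hb⟩).2
  omega

/-- restriction of an SYT to the complement of the top cell -/
noncomputable def resT (r : ℕ × ℕ) (T : ↥S → Fin S.card) : ↥(S.erase r) → Fin (S.erase r).card :=
  fun b => ⟨min (T ⟨b.1, Finset.mem_of_mem_erase b.2⟩ : ℕ) ((S.erase r).card - 1),
    by
      have h1 : (S.erase r).card ≠ 0 := by
        rw [Finset.card_ne_zero]
        exact ⟨b.1, b.2⟩
      omega⟩

/-- extension of an SYT by a new top cell -/
noncomputable def extT (r : ℕ × ℕ) (hr : r ∈ S) (T : ↥(S.erase r) → Fin (S.erase r).card) :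
    ↥S → Fin S.card :=
  fun b => if hb : b.1 = r then ⟨S.card - 1, by
      have := Finset.card_pos.2 ⟨r, hr⟩; omega⟩
    else ⟨(T ⟨b.1, Finset.mem_erase.2 ⟨hb, b.2⟩⟩ : ℕ), by
      have h2 := (T ⟨b.1, Finset.mem_erase.2 ⟨hb, b.2⟩⟩).2
      have h3 : (S.erase r).card < S.card := Finset.card_erase_lt_of_mem hr
      omega⟩

end Branch
section BranchMain

variable {S : Finset (ℕ × ℕ)}

lemma extT_top {r : ℕ × ℕ} (hr : r ∈ S) (T' : ↥(S.erase r) → Fin (S.erase r).card) :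
    (extT r hr T' ⟨r, hr⟩ : ℕ) = S.card - 1 := by
  rw [extT, dif_pos rfl]

lemma extT_ne {r : ℕ × ℕ} (hr : r ∈ S) (T' : ↥(S.erase r) → Fin (S.erase r).card)
    {b : ↥S} (hb : b.1 ≠ r) :
    (extT r hr T' b : ℕ) = (T' ⟨b.1, Finset.mem_erase.2 ⟨hb, b.2⟩⟩ : ℕ) := by
  rw [extT, dif_neg hb]

theorem dim_branch (hS : S.Nonempty) :
    dimCells S = ∑ r ∈ maxC S, dimCells (S.erase r) := by
  classical
  have hn : 0 < S.card := Finset.card_pos.2 hS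
  rw [dimCells_eq]
  rw [Finset.card_eq_sum_card_fiberwise (f := topCell S) (t := maxC S)
    (fun T hT => topCell_mem_maxC (Finset.mem_filter.1 hT).2 hS)]
  refine Finset.sum_congr rfl ?_
  intro r hr
  obtain ⟨hrS, hrmax⟩ := mem_maxC.1 hr
  have hcard : (S.erase r).card = S.card - 1 := Finset.card_erase_of_mem hrS
  rw [dimCells_eq]
  apply Finset.card_nbij' (resT r) (extT r hrS)
  · -- forward map lands in target
    intro T hT
    rw [Finset.mem_coe, Finset.mem_filter] at hT
    obtain ⟨hT1, htop⟩ := hT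
    have hT' := (Finset.mem_filter.1 hT1).2
    -- T at r is the top value
    have hkey : (T ⟨r, hrS⟩ : ℕ) = S.card - 1 := by
      obtain ⟨hmem, hmem', hval⟩ := topCell_spec hT'.1.2 hS
      have : (⟨topCell S T, hmem'⟩ : ↥S) = ⟨r, hrS⟩ := Subtype.ext htop
      rwa [this] at hval
    have hlt : ∀ b : ↥(S.erase r), (T ⟨b.1, Finset.mem_of_mem_erase b.2⟩ : ℕ) < (S.erase r).card := by
      intro b
      have hbne : (⟨b.1, Finset.mem_of_mem_erase b.2⟩ : ↥S) ≠ ⟨r, hrS⟩ := by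
        intro h
        exact (Finset.mem_erase.1 b.2).1 (congrArg Subtype.val h)
      have hTne : T ⟨b.1, Finset.mem_of_mem_erase b.2⟩ ≠ T ⟨r, hrS⟩ :=
        fun h => hbne (hT'.1.1 h)
      have h1 : (T ⟨b.1, Finset.mem_of_mem_erase b.2⟩ : ℕ) < S.card :=
        (T ⟨b.1, Finset.mem_of_mem_erase b.2⟩).2
      have h2 : (T ⟨b.1, Finset.mem_of_mem_erase b.2⟩ : ℕ) ≠ S.card - 1 := by
        intro h
        exact hTne (Fin.ext (by rw [h, hkey]))
      omega
    have hres : ∀ b : ↥(S.erase r),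
        (resT r T b : ℕ) = (T ⟨b.1, Finset.mem_of_mem_erase b.2⟩ : ℕ) := by
      intro b
      show min _ _ = _
      have := hlt b
      omega
    rw [Finset.mem_coe, Finset.mem_filter]
    refine ⟨Finset.mem_univ _, ?_, ?_⟩
    · -- bijective
      have hinj : Function.Injective (resT r T) := by
        intro a b hab
        have : (T ⟨a.1, Finset.mem_of_mem_erase a.2⟩ : ℕ) =
            (T ⟨b.1, Finset.mem_of_mem_erase b.2⟩ : ℕ) := by
          rw [← hres a, ← hres b, hab]
        have h6 := hT'.1.1 (Fin.ext this)
        have h7 : a.1 = b.1 := Subtype.mk_eq_mk.1 h6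
        exact Subtype.ext h7
      rw [Fintype.bijective_iff_injective_and_card]
      exact ⟨hinj, by simp [Fintype.card_coe]⟩
    · -- monotone
      intro a b h1 h2 hab
      have hbne : (⟨a.1, Finset.mem_of_mem_erase a.2⟩ : ↥S) ≠ ⟨b.1, Finset.mem_of_mem_erase b.2⟩ := by
        intro h
        have h7 : a.1 = b.1 := Subtype.mk_eq_mk.1 h
        exact hab (Subtype.ext h7)
      have := hT'.2 _ _ h1 h2 hbne
      rw [Fin.lt_def] at this ⊢
      rw [hres a, hres b]
      exact this
  · -- backward map lands in source
    intro T' hT'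
    rw [Finset.mem_coe, Finset.mem_filter] at hT'
    have hP := hT'.2
    -- injectivity of extension
    have hinj : Function.Injective (extT r hrS T') := by
      intro a b hab
      by_cases ha : a.1 = r <;> by_cases hb : b.1 = r
      · exact Subtype.ext (ha.trans hb.symm)
      · exfalso
        have h2 := extT_ne hrS T' hb
        have h3 := (T' ⟨b.1, Finset.mem_erase.2 ⟨hb, b.2⟩⟩).2
        have h4 : (extT r hrS T' ⟨r, hrS⟩ : ℕ) = S.card - 1 := extT_top hrS T'
        have h5 : (extT r hrS T' a : ℕ) = S.card - 1 := by
          have : a = (⟨r, hrS⟩ : ↥S) := Subtype.ext ha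
          rw [this]; exact h4
        rw [hab] at h5
        rw [h2] at h5
        omega
      · exfalso
        have h2 := extT_ne hrS T' ha
        have h3 := (T' ⟨a.1, Finset.mem_erase.2 ⟨ha, a.2⟩⟩).2
        have h5 : (extT r hrS T' b : ℕ) = S.card - 1 := by
          have : b = (⟨r, hrS⟩ : ↥S) := Subtype.ext hb
          rw [this]; exact extT_top hrS T'
        rw [← hab] at h5
        rw [h2] at h5
        omega
      · have h1 := extT_ne hrS T' ha
        have h2 := extT_ne hrS T' hb
        have : (T' ⟨a.1, Finset.mem_erase.2 ⟨ha, a.2⟩⟩ : ℕ) =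
            (T' ⟨b.1, Finset.mem_erase.2 ⟨hb, b.2⟩⟩ : ℕ) := by
          rw [← h1, ← h2, hab]
        have h6 := hP.1.1 (Fin.ext this)
        have h7 : a.1 = b.1 := Subtype.mk_eq_mk.1 h6
        exact Subtype.ext h7
    rw [Finset.mem_coe, Finset.mem_filter, Finset.mem_filter]
    refine ⟨⟨Finset.mem_univ _, ?_, ?_⟩, ?_⟩
    · rw [Fintype.bijective_iff_injective_and_card]
      exact ⟨hinj, by simp [Fintype.card_coe]⟩
    · -- monotone
      intro a b h1 h2 hab
      by_cases hb : b.1 = r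
      · have ha : a.1 ≠ r := by
          intro h
          exact hab (Subtype.ext (h.trans hb.symm))
        rw [Fin.lt_def]
        rw [extT_ne hrS T' ha]
        have hv : (extT r hrS T' b : ℕ) = S.card - 1 := by
          have : b = (⟨r, hrS⟩ : ↥S) := Subtype.ext hb
          rw [this]; exact extT_top hrS T'
        rw [hv]
        have h3 := (T' ⟨a.1, Finset.mem_erase.2 ⟨ha, a.2⟩⟩).2
        omega
      · by_cases ha : a.1 = r
        · exfalso
          have : a.1 ≤ b.1 := ⟨h1, h2⟩
          rw [ha] at this
          have := hrmax b.1 b.2 this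
          exact hb this
        · have hbne : (⟨a.1, Finset.mem_erase.2 ⟨ha, a.2⟩⟩ : ↥(S.erase r)) ≠
              ⟨b.1, Finset.mem_erase.2 ⟨hb, b.2⟩⟩ := by
            intro h
            have h7 : a.1 = b.1 := Subtype.mk_eq_mk.1 h
            exact hab (Subtype.ext h7)
          have := hP.2 _ _ h1 h2 hbne
          rw [Fin.lt_def] at this ⊢
          rw [extT_ne hrS T' ha, extT_ne hrS T' hb]
          exact this
    · -- topCell of extension is r
      apply topCell_eq hinj (a := ⟨r, hrS⟩)
      exact extT_top hrS T'
  · -- left inverse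
    intro T hT
    rw [Finset.mem_coe, Finset.mem_filter] at hT
    obtain ⟨hT1, htop⟩ := hT
    have hT' := (Finset.mem_filter.1 hT1).2
    have hkey : (T ⟨r, hrS⟩ : ℕ) = S.card - 1 := by
      obtain ⟨hmem, hmem', hval⟩ := topCell_spec hT'.1.2 hS
      have : (⟨topCell S T, hmem'⟩ : ↥S) = ⟨r, hrS⟩ := Subtype.ext htop
      rwa [this] at hval
    funext b
    by_cases hb : b.1 = r
    · have : b = (⟨r, hrS⟩ : ↥S) := Subtype.ext hb
      rw [this]
      apply Fin.ext
      rw [extT_top hrS _, hkey]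
    · apply Fin.ext
      rw [extT_ne hrS _ hb]
      show min _ _ = _
      -- value < card erase
      have hbne : (⟨b.1, Finset.mem_of_mem_erase (Finset.mem_erase.2 ⟨hb, b.2⟩)⟩ : ↥S) ≠ ⟨r, hrS⟩ :=
        fun h => hb (congrArg Subtype.val h)
      have hTne : T ⟨b.1, _⟩ ≠ T ⟨r, hrS⟩ := fun h => hbne (hT'.1.1 h)
      have h1 : (T ⟨b.1, Finset.mem_of_mem_erase (Finset.mem_erase.2 ⟨hb, b.2⟩)⟩ : ℕ) < S.card :=
        (T _).2
      have h2 : (T ⟨b.1, Finset.mem_of_mem_erase (Finset.mem_erase.2 ⟨hb, b.2⟩)⟩ : ℕ) ≠ S.card - 1 := by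
        intro h
        exact hTne (Fin.ext (by rw [h, hkey]))
      have hb2 : b = (⟨b.1, Finset.mem_of_mem_erase (Finset.mem_erase.2 ⟨hb, b.2⟩)⟩ : ↥S) :=
        Subtype.ext rfl
      rw [← hb2] at h1 h2 ⊢
      omega
  · -- right inverse
    intro T' hT'
    funext b
    have hbne : b.1 ≠ r := (Finset.mem_erase.1 b.2).1
    apply Fin.ext
    show min ((extT r hrS T' ⟨b.1, _⟩ : ℕ)) _ = _
    rw [extT_ne hrS T' hbne]
    have hb2 : (⟨b.1, Finset.mem_erase.2 ⟨hbne, Finset.mem_of_mem_erase b.2⟩⟩ : ↥(S.erase r)) = b :=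
      Subtype.ext rfl
    rw [hb2]
    have h1 : (T' b : ℕ) < (S.erase r).card := (T' b).2
    omega

end BranchMain
section Corners

variable {S₀ : Finset (ℕ × ℕ)} {a : ℕ × ℕ}

lemma cell_below_mem (hS₀ : IsLowerSet (↑S₀ : Set (ℕ × ℕ))) (ha : a ∈ addC S₀)
    {x : ℕ × ℕ} (hx : x ≤ a) (hne : x ≠ a) : x ∈ S₀ := by
  have h := (mem_addC.1 ha).2 hx (Finset.mem_coe.2 (Finset.mem_insert_self a S₀))
  rcases Finset.mem_insert.1 (Finset.mem_coe.1 h) with h | h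
  · exact absurd h hne
  · exact h

lemma not_above (ha : a ∈ addC S₀) (hS₀ : IsLowerSet (↑S₀ : Set (ℕ × ℕ)))
    {x : ℕ × ℕ} (hx : x ∈ S₀) : ¬ a ≤ x :=
  fun h => (mem_addC.1 ha).1 (hS₀ h hx)

lemma insert_lower (ha : a ∈ addC S₀) : IsLowerSet (↑(insert a S₀) : Set (ℕ × ℕ)) :=
  (mem_addC.1 ha).2

lemma mem_maxC_insert (hS₀ : IsLowerSet (↑S₀ : Set (ℕ × ℕ))) (ha : a ∈ addC S₀) {x : ℕ × ℕ} :
    x ∈ maxC (insert a S₀) ↔ x = a ∨ (x ∈ maxC S₀ ∧ ¬ x ≤ a) := by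
  constructor
  · intro hx
    rw [mem_maxC] at hx
    rcases Finset.mem_insert.1 hx.1 with h | h
    · exact Or.inl h
    · right
      have hxa : x ≠ a := fun he => (mem_addC.1 ha).1 (he ▸ h)
      refine ⟨mem_maxC.2 ⟨h, fun b hb => hx.2 b (Finset.mem_insert_of_mem hb)⟩, ?_⟩
      intro hle
      exact hxa (hx.2 a (Finset.mem_insert_self _ _) hle ▸ rfl)
  · rintro (rfl | ⟨hx, hxa⟩)
    · exact addable_mem_maxC_insert hS₀ ha
    · rw [mem_maxC] at hx ⊢
      refine ⟨Finset.mem_insert_of_mem hx.1, ?_⟩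
      intro b hb hle
      rcases Finset.mem_insert.1 hb with rfl | hb
      · exact absurd hle hxa
      · exact hx.2 b hb hle

lemma vert_add_iff (hS₀ : IsLowerSet (↑S₀ : Set (ℕ × ℕ))) (ha : a ∈ addC S₀) :
    (a.1, a.2 + 1) ∈ addC (insert a S₀) ↔ (a.1 = 0 ∨ (a.1 - 1, a.2 + 1) ∈ S₀) := by
  have hSl := insert_lower ha
  constructor
  · intro h
    by_cases hi : a.1 = 0
    · exact Or.inl hi
    · right
      have hle : (a.1 - 1, a.2 + 1) ≤ (a.1, a.2 + 1) := ⟨Nat.sub_le _ _, le_rfl⟩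
      have hne : (a.1 - 1, a.2 + 1) ≠ (a.1, a.2 + 1) := by
        intro he
        have := congrArg Prod.fst he
        simp only at this
        omega
      have hmem := cell_below_mem hSl h hle hne
      rcases Finset.mem_insert.1 hmem with he | hmem
      · exfalso
        have := congrArg Prod.snd he
        simp only at this
        omega
      · exact hmem
  · intro hcond
    rw [mem_addC]
    constructor
    · intro hmem
      rcases Finset.mem_insert.1 hmem with he | hmem
      · have := congrArg Prod.snd he; simp only at this; omega
      · have : a ≤ (a.1, a.2 + 1) := ⟨le_rfl, Nat.le_succ _⟩
        exact (mem_addC.1 ha).1 (hS₀ this hmem)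
    · intro y x hxy hy
      simp only [Finset.coe_insert, Set.mem_insert_iff, Finset.mem_coe] at hy ⊢
      rcases hy with rfl | hy
      · -- y is the new cell
        by_cases hx2 : x.2 ≤ a.2
        · have hxa : x ≤ a := ⟨hxy.1, hx2⟩
          have := hSl hxa (Finset.mem_coe.2 (Finset.mem_insert_self a S₀))
          rcases Finset.mem_insert.1 (Finset.mem_coe.1 this) with h | h
          · exact Or.inr (Or.inl h)
          · exact Or.inr (Or.inr h)
        · have hx2' : x.2 = a.2 + 1 := by
            have := hxy.2; simp only at this; omega
          by_cases hx1 : x.1 = a.1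
          · left
            exact Prod.ext hx1 hx2'
          · right; right
            have hx1' : x.1 < a.1 := lt_of_le_of_ne hxy.1 hx1
            have hia : a.1 ≠ 0 := by omega
            rcases hcond with h | h
            · exact absurd h hia
            · have hle : x ≤ (a.1 - 1, a.2 + 1) := ⟨by omega, by rw [hx2']⟩
              exact hS₀ hle h
      · rcases hy with rfl | hy
        · have := hSl hxy (Finset.mem_coe.2 (Finset.mem_insert_self _ S₀))
          rcases Finset.mem_insert.1 (Finset.mem_coe.1 this) with h | h
          · exact Or.inr (Or.inl h)
          · exact Or.inr (Or.inr h)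
        · exact Or.inr (Or.inr (hS₀ hxy hy))

lemma horiz_add_iff (hS₀ : IsLowerSet (↑S₀ : Set (ℕ × ℕ))) (ha : a ∈ addC S₀) :
    (a.1 + 1, a.2) ∈ addC (insert a S₀) ↔ (a.2 = 0 ∨ (a.1 + 1, a.2 - 1) ∈ S₀) := by
  have hSl := insert_lower ha
  constructor
  · intro h
    by_cases hj : a.2 = 0
    · exact Or.inl hj
    · right
      have hle : (a.1 + 1, a.2 - 1) ≤ (a.1 + 1, a.2) := ⟨le_rfl, Nat.sub_le _ _⟩
      have hne : (a.1 + 1, a.2 - 1) ≠ (a.1 + 1, a.2) := by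
        intro he
        have := congrArg Prod.snd he
        simp only at this
        omega
      have hmem := cell_below_mem hSl h hle hne
      rcases Finset.mem_insert.1 hmem with he | hmem
      · exfalso
        have := congrArg Prod.fst he
        simp only at this
        omega
      · exact hmem
  · intro hcond
    rw [mem_addC]
    constructor
    · intro hmem
      rcases Finset.mem_insert.1 hmem with he | hmem
      · have := congrArg Prod.fst he; simp only at this; omega
      · have : a ≤ (a.1 + 1, a.2) := ⟨Nat.le_succ _, le_rfl⟩
        exact (mem_addC.1 ha).1 (hS₀ this hmem)
    · intro y x hxy hy
      simp only [Finset.coe_insert, Set.mem_insert_iff, Finset.mem_coe] at hy ⊢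
      rcases hy with rfl | hy
      · by_cases hx1 : x.1 ≤ a.1
        · have hxa : x ≤ a := ⟨hx1, hxy.2⟩
          have := hSl hxa (Finset.mem_coe.2 (Finset.mem_insert_self a S₀))
          rcases Finset.mem_insert.1 (Finset.mem_coe.1 this) with h | h
          · exact Or.inr (Or.inl h)
          · exact Or.inr (Or.inr h)
        · have hx1' : x.1 = a.1 + 1 := by
            have := hxy.1; simp only at this; omega
          by_cases hx2 : x.2 = a.2
          · left
            exact Prod.ext hx1' hx2
          · right; right
            have hx2' : x.2 < a.2 := lt_of_le_of_ne hxy.2 hx2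
            have hja : a.2 ≠ 0 := by omega
            rcases hcond with h | h
            · exact absurd h hja
            · have hle : x ≤ (a.1 + 1, a.2 - 1) := ⟨by rw [hx1'], by omega⟩
              exact hS₀ hle h
      · rcases hy with rfl | hy
        · have := hSl hxy (Finset.mem_coe.2 (Finset.mem_insert_self _ S₀))
          rcases Finset.mem_insert.1 (Finset.mem_coe.1 this) with h | h
          · exact Or.inr (Or.inl h)
          · exact Or.inr (Or.inr h)
        · exact Or.inr (Or.inr (hS₀ hxy hy))

lemma vert_max_iff (hS₀ : IsLowerSet (↑S₀ : Set (ℕ × ℕ))) (ha : a ∈ addC S₀)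
    (hi : a.1 ≠ 0) : (a.1 - 1, a.2) ∈ maxC S₀ ↔ (a.1 - 1, a.2 + 1) ∉ S₀ := by
  have hmem : (a.1 - 1, a.2) ∈ S₀ := by
    have hle : (a.1 - 1, a.2) ≤ a := ⟨Nat.sub_le _ _, le_rfl⟩
    refine cell_below_mem hS₀ ha hle ?_
    intro he
    have := congrArg Prod.fst he; simp only at this; omega
  constructor
  · intro h hcontra
    rw [mem_maxC] at h
    have hle : (a.1 - 1, a.2) ≤ (a.1 - 1, a.2 + 1) := ⟨le_rfl, Nat.le_succ _⟩
    have := h.2 _ hcontra hle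
    have := congrArg Prod.snd this; simp only at this; omega
  · intro h
    rw [mem_maxC]
    refine ⟨hmem, ?_⟩
    intro b hb hle
    by_contra hne
    have h1 : a.1 - 1 ≤ b.1 := hle.1
    have h2 : a.2 ≤ b.2 := hle.2
    by_cases hb1 : a.1 ≤ b.1
    · exact not_above ha hS₀ hb ⟨hb1, h2⟩
    · have hb1' : b.1 = a.1 - 1 := by omega
      have hb2 : a.2 + 1 ≤ b.2 := by
        rcases Nat.lt_or_ge b.2 (a.2 + 1) with h' | h'
        · exfalso
          apply hne
          have : b.2 = a.2 := by omega
          exact Prod.ext hb1' this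
        · exact h'
      exact h (hS₀ (⟨le_of_eq hb1'.symm, hb2⟩ : (a.1 - 1, a.2 + 1) ≤ b) hb)

lemma horiz_max_iff (hS₀ : IsLowerSet (↑S₀ : Set (ℕ × ℕ))) (ha : a ∈ addC S₀)
    (hj : a.2 ≠ 0) : (a.1, a.2 - 1) ∈ maxC S₀ ↔ (a.1 + 1, a.2 - 1) ∉ S₀ := by
  have hmem : (a.1, a.2 - 1) ∈ S₀ := by
    have hle : (a.1, a.2 - 1) ≤ a := ⟨le_rfl, Nat.sub_le _ _⟩
    refine cell_below_mem hS₀ ha hle ?_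
    intro he
    have := congrArg Prod.snd he; simp only at this; omega
  constructor
  · intro h hcontra
    rw [mem_maxC] at h
    have hle : (a.1, a.2 - 1) ≤ (a.1 + 1, a.2 - 1) := ⟨Nat.le_succ _, le_rfl⟩
    have := h.2 _ hcontra hle
    have := congrArg Prod.fst this; simp only at this; omega
  · intro h
    rw [mem_maxC]
    refine ⟨hmem, ?_⟩
    intro b hb hle
    by_contra hne
    have h1 : a.1 ≤ b.1 := hle.1
    have h2 : a.2 - 1 ≤ b.2 := hle.2
    by_cases hb2 : a.2 ≤ b.2
    · exact not_above ha hS₀ hb ⟨h1, hb2⟩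
    · have hb2' : b.2 = a.2 - 1 := by omega
      have hb1 : a.1 + 1 ≤ b.1 := by
        rcases Nat.lt_or_ge b.1 (a.1 + 1) with h' | h'
        · exfalso
          apply hne
          have : b.1 = a.1 := by omega
          exact Prod.ext this hb2'
        · exact h'
      exact h (hS₀ (⟨hb1, le_of_eq hb2'.symm⟩ : (a.1 + 1, a.2 - 1) ≤ (b.1, b.2)) hb)

end Corners
section Telescope

variable {S₀ : Finset (ℕ × ℕ)} {a : ℕ × ℕ}

lemma up_not_addable (ha : a ∈ addC S₀) : (a.1, a.2 + 1) ∉ addC S₀ := by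
  intro h
  have hle : a ≤ (a.1, a.2 + 1) := ⟨le_rfl, Nat.le_succ _⟩
  have := (mem_addC.1 h).2 hle (Finset.mem_coe.2 (Finset.mem_insert_self _ _))
  rcases Finset.mem_insert.1 (Finset.mem_coe.1 this) with he | hm
  · have := congrArg Prod.snd he; simp only at this; omega
  · exact (mem_addC.1 ha).1 hm

lemma right_not_addable (ha : a ∈ addC S₀) : (a.1 + 1, a.2) ∉ addC S₀ := by
  intro h
  have hle : a ≤ (a.1 + 1, a.2) := ⟨Nat.le_succ _, le_rfl⟩
  have := (mem_addC.1 h).2 hle (Finset.mem_coe.2 (Finset.mem_insert_self _ _))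
  rcases Finset.mem_insert.1 (Finset.mem_coe.1 this) with he | hm
  · have := congrArg Prod.fst he; simp only at this; omega
  · exact (mem_addC.1 ha).1 hm

lemma mem_addC_insert (hS₀ : IsLowerSet (↑S₀ : Set (ℕ × ℕ))) (ha : a ∈ addC S₀) {x : ℕ × ℕ} :
    x ∈ addC (insert a S₀) ↔ ((x ∈ addC S₀ ∧ x ≠ a) ∨
      (x = (a.1, a.2 + 1) ∧ (a.1 = 0 ∨ (a.1 - 1, a.2 + 1) ∈ S₀)) ∨
      (x = (a.1 + 1, a.2) ∧ (a.2 = 0 ∨ (a.1 + 1, a.2 - 1) ∈ S₀))) := by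
  have hSl := insert_lower ha
  have haS₀ : a ∉ S₀ := (mem_addC.1 ha).1
  constructor
  · intro hx
    obtain ⟨hx1, hx2⟩ := mem_addC.1 hx
    have hxa : x ≠ a := fun he => hx1 (he ▸ Finset.mem_insert_self a S₀)
    have hxS₀ : x ∉ S₀ := fun hm => hx1 (Finset.mem_insert_of_mem hm)
    by_cases hxadd : x ∈ addC S₀
    · exact Or.inl ⟨hxadd, hxa⟩
    · right
      -- insert x S₀ is not a lower set, find the violation
      have hnl : ¬ IsLowerSet (↑(insert x S₀) : Set (ℕ × ℕ)) := by
        intro h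
        exact hxadd (mem_addC.2 ⟨hxS₀, h⟩)
      rw [IsLowerSet] at hnl
      push_neg at hnl
      obtain ⟨p, q, hqp, hp, hq⟩ := hnl
      -- q ∉ insert x S₀ but q ≤ p ∈ insert x S₀
      have hpS : p ∈ (↑(insert x (insert a S₀)) : Set (ℕ × ℕ)) := by
        simp only [Finset.coe_insert, Set.mem_insert_iff, Finset.mem_coe] at hp ⊢
        tauto
      have hqmem := hx2 hqp hpS
      have hqa : q = a := by
        simp only [Finset.coe_insert, Set.mem_insert_iff, Finset.mem_coe] at hqmem hq
        push_neg at hq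
        rcases hqmem with h | h | h
        · exact absurd h hq.1
        · exact h
        · exact absurd h hq.2
      have hpx : p = x := by
        simp only [Finset.coe_insert, Set.mem_insert_iff, Finset.mem_coe] at hp
        rcases hp with h | h
        · exact h
        · exfalso
          rw [hqa] at hqp
          exact absurd (hS₀ hqp h) haS₀
      -- now a ≤ x, a ≠ x
      have hax : a ≤ x := by rw [hqa, hpx] at hqp; exact hqp
      -- x cannot be strictly above in both coordinates
      have hcase : x.1 = a.1 ∨ x.2 = a.2 := by
        by_contra hcon
        push_neg at hcon
        have h1 : a.1 < x.1 := lt_of_le_of_ne hax.1 (Ne.symm hcon.1)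
        have h2 : a.2 < x.2 := lt_of_le_of_ne hax.2 (Ne.symm hcon.2)
        have hw : (a.1, x.2) ∈ (↑(insert x (insert a S₀)) : Set (ℕ × ℕ)) :=
          hx2 (⟨le_of_lt h1, le_rfl⟩ : (a.1, x.2) ≤ x)
            (by simp only [Finset.coe_insert, Set.mem_insert_iff]; tauto)
        simp only [Finset.coe_insert, Set.mem_insert_iff, Finset.mem_coe] at hw
        rcases hw with he | he | hm
        · have := congrArg Prod.fst he; simp only at this; omega
        · have := congrArg Prod.snd he; simp only at this; omega
        · exact not_above ha hS₀ hm ⟨le_rfl, le_of_lt h2⟩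
      rcases hcase with hc | hc
      · -- vertical neighbor
        left
        have h2 : a.2 < x.2 := by
          rcases lt_or_eq_of_le hax.2 with h | h
          · exact h
          · exact absurd (Prod.ext hc h.symm) hxa
        have hxe : x = (a.1, a.2 + 1) := by
          by_contra hne
          have h3 : a.2 + 1 < x.2 := by
            rcases Nat.lt_or_ge (a.2 + 1) x.2 with h' | h'
            · exact h'
            · exfalso; exact hne (Prod.ext hc (by omega))
          have hw : (a.1, a.2 + 1) ∈ (↑(insert x (insert a S₀)) : Set (ℕ × ℕ)) :=
            hx2 (⟨le_of_eq hc.symm, le_of_lt h3⟩ : (a.1, a.2 + 1) ≤ x)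
              (by simp only [Finset.coe_insert, Set.mem_insert_iff]; tauto)
          simp only [Finset.coe_insert, Set.mem_insert_iff, Finset.mem_coe] at hw
          rcases hw with he | he | hm
          · have h4 := congrArg Prod.fst he
            have h5 := congrArg Prod.snd he
            simp only at h4 h5
            exact hne (Prod.ext h4.symm h5.symm)
          · have := congrArg Prod.snd he; simp only at this; omega
          · exact not_above ha hS₀ hm ⟨le_rfl, Nat.le_succ _⟩
        refine ⟨hxe, ?_⟩
        rw [← vert_add_iff hS₀ ha, ← hxe]
        exact hx
      · -- horizontal neighbor
        right
        have h1 : a.1 < x.1 := by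
          rcases lt_or_eq_of_le hax.1 with h | h
          · exact h
          · exact absurd (Prod.ext h.symm hc) hxa
        have hxe : x = (a.1 + 1, a.2) := by
          by_contra hne
          have h3 : a.1 + 1 < x.1 := by
            rcases Nat.lt_or_ge (a.1 + 1) x.1 with h' | h'
            · exact h'
            · exfalso; exact hne (Prod.ext (by omega) hc)
          have hw : (a.1 + 1, a.2) ∈ (↑(insert x (insert a S₀)) : Set (ℕ × ℕ)) :=
            hx2 (⟨le_of_lt h3, le_of_eq hc.symm⟩ : (a.1 + 1, a.2) ≤ x)
              (by simp only [Finset.coe_insert, Set.mem_insert_iff]; tauto)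
          simp only [Finset.coe_insert, Set.mem_insert_iff, Finset.mem_coe] at hw
          rcases hw with he | he | hm
          · have h4 := congrArg Prod.fst he
            have h5 := congrArg Prod.snd he
            simp only at h4 h5
            exact hne (Prod.ext h4.symm h5.symm)
          · have := congrArg Prod.fst he; simp only at this; omega
          · exact not_above ha hS₀ hm ⟨Nat.le_succ _, le_rfl⟩
        refine ⟨hxe, ?_⟩
        rw [← horiz_add_iff hS₀ ha, ← hxe]
        exact hx
  · rintro (⟨hxadd, hxa⟩ | ⟨rfl, hcond⟩ | ⟨rfl, hcond⟩)
    · rw [mem_addC]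
      refine ⟨?_, ?_⟩
      · intro hm
        rcases Finset.mem_insert.1 hm with he | hm
        · exact hxa he
        · exact (mem_addC.1 hxadd).1 hm
      · have : (↑(insert x (insert a S₀)) : Set (ℕ × ℕ)) =
            (↑(insert x S₀) : Set (ℕ × ℕ)) ∪ (↑(insert a S₀) : Set (ℕ × ℕ)) := by
          ext y
          simp only [Finset.coe_insert, Set.mem_insert_iff, Finset.mem_coe, Set.mem_union]
          tauto
        rw [this]
        exact IsLowerSet.union (mem_addC.1 hxadd).2 hSl
    · exact (vert_add_iff hS₀ ha).2 hcond
    · exact (horiz_add_iff hS₀ ha).2 hcond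

lemma maxD_char (hS₀ : IsLowerSet (↑S₀ : Set (ℕ × ℕ))) (ha : a ∈ addC S₀) {x : ℕ × ℕ} :
    (x ∈ maxC S₀ ∧ x ≤ a) ↔
      ((a.1 ≠ 0 ∧ x = (a.1 - 1, a.2) ∧ x ∈ maxC S₀) ∨
       (a.2 ≠ 0 ∧ x = (a.1, a.2 - 1) ∧ x ∈ maxC S₀)) := by
  have haS₀ : a ∉ S₀ := (mem_addC.1 ha).1
  constructor
  · rintro ⟨hx, hle⟩
    have hxS₀ : x ∈ S₀ := (mem_maxC.1 hx).1
    have hxa : x ≠ a := fun he => haS₀ (he ▸ hxS₀)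
    have hcase : x.1 = a.1 ∨ x.2 = a.2 := by
      by_contra hcon
      push_neg at hcon
      have h1 : x.1 < a.1 := lt_of_le_of_ne hle.1 hcon.1
      have h2 : x.2 < a.2 := lt_of_le_of_ne hle.2 hcon.2
      have hw : (a.1 - 1, a.2) ∈ S₀ := by
        have hle' : (a.1 - 1, a.2) ≤ a := ⟨Nat.sub_le _ _, le_rfl⟩
        refine cell_below_mem hS₀ ha hle' ?_
        intro he
        have := congrArg Prod.fst he; simp only at this; omega
      have hxw : x ≤ (a.1 - 1, a.2) := ⟨by omega, le_of_lt h2⟩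
      have := (mem_maxC.1 hx).2 _ hw hxw
      have := congrArg Prod.snd this; simp only at this; omega
    rcases hcase with hc | hc
    · -- x.1 = a.1, so x = (a.1, a.2 - 1)
      right
      have h2 : x.2 < a.2 := by
        rcases lt_or_eq_of_le hle.2 with h | h
        · exact h
        · exact absurd (Prod.ext hc h) hxa
      have hj : a.2 ≠ 0 := by omega
      refine ⟨hj, ?_, hx⟩
      by_contra hne
      have h3 : x.2 < a.2 - 1 := by
        rcases Nat.lt_or_ge x.2 (a.2 - 1) with h' | h'
        · exact h'
        · exfalso; exact hne (Prod.ext hc (by omega))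
      have hw : (a.1, a.2 - 1) ∈ S₀ := by
        have hle' : (a.1, a.2 - 1) ≤ a := ⟨le_rfl, Nat.sub_le _ _⟩
        refine cell_below_mem hS₀ ha hle' ?_
        intro he
        have := congrArg Prod.snd he; simp only at this; omega
      have hxw : x ≤ (a.1, a.2 - 1) := ⟨le_of_eq hc, le_of_lt h3⟩
      have := (mem_maxC.1 hx).2 _ hw hxw
      have := congrArg Prod.snd this; simp only at this; omega
    · -- x.2 = a.2, so x = (a.1 - 1, a.2)
      left
      have h1 : x.1 < a.1 := by
        rcases lt_or_eq_of_le hle.1 with h | h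
        · exact h
        · exact absurd (Prod.ext h hc) hxa
      have hi : a.1 ≠ 0 := by omega
      refine ⟨hi, ?_, hx⟩
      by_contra hne
      have h3 : x.1 < a.1 - 1 := by
        rcases Nat.lt_or_ge x.1 (a.1 - 1) with h' | h'
        · exact h'
        · exfalso; exact hne (Prod.ext (by omega) hc)
      have hw : (a.1 - 1, a.2) ∈ S₀ := by
        have hle' : (a.1 - 1, a.2) ≤ a := ⟨Nat.sub_le _ _, le_rfl⟩
        refine cell_below_mem hS₀ ha hle' ?_
        intro he
        have := congrArg Prod.fst he; simp only at this; omega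
      have hxw : x ≤ (a.1 - 1, a.2) := ⟨le_of_lt h3, le_of_eq hc⟩
      have := (mem_maxC.1 hx).2 _ hw hxw
      have := congrArg Prod.fst this; simp only at this; omega
  · rintro (⟨hi, rfl, hx⟩ | ⟨hj, rfl, hx⟩)
    · exact ⟨hx, ⟨Nat.sub_le _ _, le_rfl⟩⟩
    · exact ⟨hx, ⟨le_rfl, Nat.sub_le _ _⟩⟩

end Telescope
section TelescopeSets

variable {S₀ : Finset (ℕ × ℕ)} {a : ℕ × ℕ}

open Classical in
lemma addC_insert_set (hS₀ : IsLowerSet (↑S₀ : Set (ℕ × ℕ))) (ha : a ∈ addC S₀) :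
    addC (insert a S₀) =
      ((addC S₀).erase a) ∪
        ((if (a.1 = 0 ∨ (a.1 - 1, a.2 + 1) ∈ S₀) then {(a.1, a.2 + 1)} else ∅) ∪
         (if (a.2 = 0 ∨ (a.1 + 1, a.2 - 1) ∈ S₀) then {(a.1 + 1, a.2)} else ∅)) := by
  ext x
  rw [mem_addC_insert hS₀ ha]
  by_cases h1 : (a.1 = 0 ∨ (a.1 - 1, a.2 + 1) ∈ S₀) <;>
    by_cases h2 : (a.2 = 0 ∨ (a.1 + 1, a.2 - 1) ∈ S₀)
  · rw [if_pos h1, if_pos h2]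
    simp only [Finset.mem_union, Finset.mem_erase, Finset.mem_singleton]
    tauto
  · rw [if_pos h1, if_neg h2]
    simp only [Finset.mem_union, Finset.mem_erase, Finset.mem_singleton,
      Finset.notMem_empty]
    tauto
  · rw [if_neg h1, if_pos h2]
    simp only [Finset.mem_union, Finset.mem_erase, Finset.mem_singleton,
      Finset.notMem_empty]
    tauto
  · rw [if_neg h1, if_neg h2]
    simp only [Finset.mem_union, Finset.mem_erase, Finset.mem_singleton,
      Finset.notMem_empty]
    tauto

open Classical in
lemma maxD_set (hS₀ : IsLowerSet (↑S₀ : Set (ℕ × ℕ))) (ha : a ∈ addC S₀) :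
    (maxC S₀).filter (fun x => x ≤ a) =
      ((if (a.1 ≠ 0 ∧ (a.1 - 1, a.2) ∈ maxC S₀) then {(a.1 - 1, a.2)} else ∅) ∪
       (if (a.2 ≠ 0 ∧ (a.1, a.2 - 1) ∈ maxC S₀) then {(a.1, a.2 - 1)} else ∅)) := by
  have hchar : ∀ x : ℕ × ℕ, (x ∈ maxC S₀ ∧ x ≤ a) ↔
      (((a.1 ≠ 0 ∧ (a.1 - 1, a.2) ∈ maxC S₀) ∧ x = (a.1 - 1, a.2)) ∨
       ((a.2 ≠ 0 ∧ (a.1, a.2 - 1) ∈ maxC S₀) ∧ x = (a.1, a.2 - 1))) := by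
    intro x
    rw [maxD_char hS₀ ha]
    constructor
    · rintro (⟨hi, rfl, hm⟩ | ⟨hj, rfl, hm⟩)
      · exact Or.inl ⟨⟨hi, hm⟩, rfl⟩
      · exact Or.inr ⟨⟨hj, hm⟩, rfl⟩
    · rintro (⟨⟨hi, hm⟩, rfl⟩ | ⟨⟨hj, hm⟩, rfl⟩)
      · exact Or.inl ⟨hi, rfl, hm⟩
      · exact Or.inr ⟨hj, rfl, hm⟩
  ext x
  rw [Finset.mem_filter, hchar x]
  by_cases hP1 : (a.1 ≠ 0 ∧ (a.1 - 1, a.2) ∈ maxC S₀) <;>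
    by_cases hP2 : (a.2 ≠ 0 ∧ (a.1, a.2 - 1) ∈ maxC S₀)
  · rw [if_pos hP1, if_pos hP2]
    simp only [Finset.mem_union, Finset.mem_singleton]
    tauto
  · rw [if_pos hP1, if_neg hP2]
    simp only [Finset.mem_union, Finset.mem_singleton, Finset.notMem_empty]
    tauto
  · rw [if_neg hP1, if_pos hP2]
    simp only [Finset.mem_union, Finset.mem_singleton, Finset.notMem_empty]
    tauto
  · rw [if_neg hP1, if_neg hP2]
    simp only [Finset.mem_union, Finset.mem_singleton, Finset.notMem_empty]
    tauto

lemma maxC_insert_set (hS₀ : IsLowerSet (↑S₀ : Set (ℕ × ℕ))) (ha : a ∈ addC S₀) :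
    maxC (insert a S₀) = insert a ((maxC S₀).filter (fun x => ¬ x ≤ a)) := by
  ext x
  rw [mem_maxC_insert hS₀ ha]
  simp [Finset.mem_insert, Finset.mem_filter]

end TelescopeSets
section TelescopeSums

variable {S₀ : Finset (ℕ × ℕ)} {a : ℕ × ℕ}

open Classical in
lemma addC_insert_sum (f : ℤ → ℂ) (hS₀ : IsLowerSet (↑S₀ : Set (ℕ × ℕ))) (ha : a ∈ addC S₀) :
    ∑ c ∈ addC (insert a S₀), f (cont c)
      = (∑ c ∈ addC S₀, f (cont c)) - f (cont a)
        + (if (a.1 = 0 ∨ (a.1 - 1, a.2 + 1) ∈ S₀) then f (cont a + 1) else 0)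
        + (if (a.2 = 0 ∨ (a.1 + 1, a.2 - 1) ∈ S₀) then f (cont a - 1) else 0) := by
  have hc1 : cont (a.1, a.2 + 1) = cont a + 1 := by unfold cont; push_cast; ring
  have hc2 : cont (a.1 + 1, a.2) = cont a - 1 := by unfold cont; push_cast; ring
  have hne12 : ((a.1, a.2 + 1) : ℕ × ℕ) ≠ (a.1 + 1, a.2) := by
    intro h; have := congrArg Prod.fst h; simp only at this; omega
  have hd1 : ((a.1, a.2 + 1) : ℕ × ℕ) ∉ (addC S₀).erase a :=
    fun h => up_not_addable ha (Finset.mem_of_mem_erase h)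
  have hd2 : ((a.1 + 1, a.2) : ℕ × ℕ) ∉ (addC S₀).erase a :=
    fun h => right_not_addable ha (Finset.mem_of_mem_erase h)
  have hdisj : Disjoint ((addC S₀).erase a)
      ((if (a.1 = 0 ∨ (a.1 - 1, a.2 + 1) ∈ S₀) then {(a.1, a.2 + 1)} else ∅) ∪
       (if (a.2 = 0 ∨ (a.1 + 1, a.2 - 1) ∈ S₀) then {(a.1 + 1, a.2)} else ∅)) := by
    rw [Finset.disjoint_right]
    intro x hx
    rcases Finset.mem_union.1 hx with h | h
    · split at h
      · rw [Finset.mem_singleton] at h; subst h; exact hd1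
      · exact absurd h (Finset.notMem_empty _)
    · split at h
      · rw [Finset.mem_singleton] at h; subst h; exact hd2
      · exact absurd h (Finset.notMem_empty _)
  rw [addC_insert_set hS₀ ha, Finset.sum_union hdisj, Finset.sum_erase_eq_sub ha]
  have hrest : ∑ x ∈ ((if (a.1 = 0 ∨ (a.1 - 1, a.2 + 1) ∈ S₀) then {(a.1, a.2 + 1)} else ∅) ∪
       (if (a.2 = 0 ∨ (a.1 + 1, a.2 - 1) ∈ S₀) then {(a.1 + 1, a.2)} else ∅)), f (cont x)
      = (if (a.1 = 0 ∨ (a.1 - 1, a.2 + 1) ∈ S₀) then f (cont a + 1) else 0)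
        + (if (a.2 = 0 ∨ (a.1 + 1, a.2 - 1) ∈ S₀) then f (cont a - 1) else 0) := by
    by_cases h1 : (a.1 = 0 ∨ (a.1 - 1, a.2 + 1) ∈ S₀) <;>
      by_cases h2 : (a.2 = 0 ∨ (a.1 + 1, a.2 - 1) ∈ S₀)
    · rw [if_pos h1, if_pos h2, if_pos h1, if_pos h2,
        Finset.sum_union (Finset.disjoint_singleton.2 hne12),
        Finset.sum_singleton, Finset.sum_singleton, hc1, hc2]
    · rw [if_pos h1, if_neg h2, if_pos h1, if_neg h2, Finset.union_empty,
        Finset.sum_singleton, hc1]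
      ring
    · rw [if_neg h1, if_pos h2, if_neg h1, if_pos h2, Finset.empty_union,
        Finset.sum_singleton, hc2]
      ring
    · rw [if_neg h1, if_neg h2, if_neg h1, if_neg h2, Finset.union_empty,
        Finset.sum_empty]
      ring
  rw [hrest]
  ring

open Classical in
lemma maxC_insert_sum (f : ℤ → ℂ) (hS₀ : IsLowerSet (↑S₀ : Set (ℕ × ℕ))) (ha : a ∈ addC S₀) :
    ∑ r ∈ maxC (insert a S₀), f (cont r)
      = f (cont a) + (∑ r ∈ maxC S₀, f (cont r))
        - (if (a.1 = 0 ∨ (a.1 - 1, a.2 + 1) ∈ S₀) then 0 else f (cont a + 1))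
        - (if (a.2 = 0 ∨ (a.1 + 1, a.2 - 1) ∈ S₀) then 0 else f (cont a - 1)) := by
  have haS₀ : a ∉ S₀ := (mem_addC.1 ha).1
  have hc3 : a.1 ≠ 0 → cont (a.1 - 1, a.2) = cont a + 1 := by intro h; unfold cont; omega
  have hc4 : a.2 ≠ 0 → cont (a.1, a.2 - 1) = cont a - 1 := by intro h; unfold cont; omega
  have hiff1 : (a.1 ≠ 0 ∧ (a.1 - 1, a.2) ∈ maxC S₀) ↔
      ¬ (a.1 = 0 ∨ (a.1 - 1, a.2 + 1) ∈ S₀) := by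
    by_cases hi : a.1 = 0
    · simp [hi]
    · rw [vert_max_iff hS₀ ha hi]
      simp [hi]
  have hiff2 : (a.2 ≠ 0 ∧ (a.1, a.2 - 1) ∈ maxC S₀) ↔
      ¬ (a.2 = 0 ∨ (a.1 + 1, a.2 - 1) ∈ S₀) := by
    by_cases hj : a.2 = 0
    · simp [hj]
    · rw [horiz_max_iff hS₀ ha hj]
      simp [hj]
  have hanm : a ∉ (maxC S₀).filter (fun x => ¬ x ≤ a) := by
    intro h
    exact haS₀ (mem_maxC.1 (Finset.mem_filter.1 h).1).1
  have hDsum : (∑ r ∈ (maxC S₀).filter (fun x => x ≤ a), f (cont r))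
      = (if (a.1 = 0 ∨ (a.1 - 1, a.2 + 1) ∈ S₀) then 0 else f (cont a + 1))
        + (if (a.2 = 0 ∨ (a.1 + 1, a.2 - 1) ∈ S₀) then 0 else f (cont a - 1)) := by
    rw [maxD_set hS₀ ha]
    by_cases hQ1 : (a.1 = 0 ∨ (a.1 - 1, a.2 + 1) ∈ S₀) <;>
      by_cases hQ2 : (a.2 = 0 ∨ (a.1 + 1, a.2 - 1) ∈ S₀)
    · rw [if_neg (by rw [hiff1]; exact not_not_intro hQ1),
        if_neg (by rw [hiff2]; exact not_not_intro hQ2), if_pos hQ1, if_pos hQ2]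
      rw [Finset.union_empty, Finset.sum_empty]
      ring
    · have hP2 := hiff2.2 hQ2
      rw [if_neg (by rw [hiff1]; exact not_not_intro hQ1), if_pos hP2,
        if_pos hQ1, if_neg hQ2]
      rw [Finset.empty_union, Finset.sum_singleton, hc4 hP2.1]
      ring
    · have hP1 := hiff1.2 hQ1
      rw [if_pos hP1, if_neg (by rw [hiff2]; exact not_not_intro hQ2),
        if_neg hQ1, if_pos hQ2]
      rw [Finset.union_empty, Finset.sum_singleton, hc3 hP1.1]
      ring
    · have hP1 := hiff1.2 hQ1
      have hP2 := hiff2.2 hQ2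
      have hne34 : ((a.1 - 1, a.2) : ℕ × ℕ) ≠ (a.1, a.2 - 1) := by
        intro h
        have h1 := congrArg Prod.fst h
        simp only at h1
        have := hP1.1
        omega
      rw [if_pos hP1, if_pos hP2, if_neg hQ1, if_neg hQ2]
      rw [Finset.sum_union (Finset.disjoint_singleton.2 hne34),
        Finset.sum_singleton, Finset.sum_singleton, hc3 hP1.1, hc4 hP2.1]
  have hsplit : (∑ r ∈ maxC S₀, f (cont r))
      = (∑ r ∈ (maxC S₀).filter (fun x => x ≤ a), f (cont r))
        + ∑ r ∈ (maxC S₀).filter (fun x => ¬ x ≤ a), f (cont r) :=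
    (Finset.sum_filter_add_sum_filter_not _ _ _).symm
  rw [maxC_insert_set hS₀ ha, Finset.sum_insert hanm, hsplit, hDsum]
  ring

/-- one-step change of the boundary sums when adding a box -/
lemma step_sums (f : ℤ → ℂ) (hS₀ : IsLowerSet (↑S₀ : Set (ℕ × ℕ))) (ha : a ∈ addC S₀) :
    ∑ c ∈ addC (insert a S₀), f (cont c)
      = (∑ r ∈ maxC (insert a S₀), f (cont r))
        + ((∑ c ∈ addC S₀, f (cont c)) - (∑ r ∈ maxC S₀, f (cont r)))
        + (f (cont a + 1) + f (cont a - 1) - 2 * f (cont a)) := by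
  classical
  rw [addC_insert_sum f hS₀ ha, maxC_insert_sum f hS₀ ha]
  by_cases hQ1 : (a.1 = 0 ∨ (a.1 - 1, a.2 + 1) ∈ S₀) <;>
    by_cases hQ2 : (a.2 = 0 ∨ (a.1 + 1, a.2 - 1) ∈ S₀)
  · rw [if_pos hQ1, if_pos hQ2, if_pos hQ1, if_pos hQ2]
    ring
  · rw [if_pos hQ1, if_neg hQ2, if_pos hQ1, if_neg hQ2]
    ring
  · rw [if_neg hQ1, if_pos hQ2, if_neg hQ1, if_pos hQ2]
    ring
  · rw [if_neg hQ1, if_neg hQ2, if_neg hQ1, if_neg hQ2]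
    ring

end TelescopeSums

theorem telescope (f : ℤ → ℂ) : ∀ S : Finset (ℕ × ℕ), IsLowerSet (↑S : Set (ℕ × ℕ)) →
    ∑ c ∈ addC S, f (cont c) = (∑ r ∈ maxC S, f (cont r)) + f 0
      + ∑ c ∈ S, (f (cont c + 1) + f (cont c - 1) - 2 * f (cont c)) := by
  intro S
  induction S using Finset.strongInduction with
  | _ S ih =>
  intro hS
  rcases S.eq_empty_or_nonempty with rfl | hne
  · rw [addC_empty]
    simp [maxC, cont]
  · obtain ⟨a, haS, hamax⟩ : ∃ a ∈ S, ∀ b ∈ S, ¬ a < b := by obtain ⟨a, ha⟩ := Finset.exists_maximal hne; exact ⟨a, ha.1, fun b hb hlt => (lt_iff_le_not_ge.1 hlt).2 (ha.2 hb (lt_iff_le_not_ge.1 hlt).1)⟩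
    have haM : a ∈ maxC S := mem_maxC.2 ⟨haS, fun b hb hle => by
      by_contra h
      exact hamax b hb (lt_of_le_of_ne hle (fun he => h he.symm))⟩
    have hS₀ : IsLowerSet (↑(S.erase a) : Set (ℕ × ℕ)) := lower_erase hS haM
    have hins : insert a (S.erase a) = S := Finset.insert_erase haS
    have haS₀ : a ∉ S.erase a := Finset.notMem_erase a S
    have ha : a ∈ addC (S.erase a) := mem_addC.2 ⟨haS₀, by rw [hins]; exact hS⟩
    have IH := ih (S.erase a) (Finset.erase_ssubset haS) hS₀
    have key := step_sums f hS₀ ha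
    rw [hins] at key
    rw [key, ← hins, Finset.sum_insert haS₀]
    rw [hins]
    linear_combination IH
section KeyLemma

variable {S : Finset (ℕ × ℕ)} {c r : ℕ × ℕ}

lemma pair_swap_fwd (hS : IsLowerSet (↑S : Set (ℕ × ℕ))) (hc : c ∈ addC S)
    (hr : r ∈ (maxC (insert c S)).erase c) :
    r ∈ maxC S ∧ c ∈ (addC (S.erase r)).erase r := by
  have hrc : r ≠ c := (Finset.mem_erase.1 hr).1
  have hrmax : r ∈ maxC (insert c S) := (Finset.mem_erase.1 hr).2
  have hrS : r ∈ S := by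
    rcases Finset.mem_insert.1 (mem_maxC.1 hrmax).1 with he | h
    · exact absurd he hrc
    · exact h
  have hrmaxS : r ∈ maxC S := maxC_mono (Finset.subset_insert c S) hrmax hrS
  refine ⟨hrmaxS, Finset.mem_erase.2 ⟨fun he => hrc he.symm, ?_⟩⟩
  rw [mem_addC]
  constructor
  · intro h
    exact (mem_addC.1 hc).1 (Finset.mem_of_mem_erase h)
  · rw [← Finset.erase_insert_of_ne (fun he => hrc he.symm)]
    exact lower_erase (insert_lower hc) hrmax

lemma pair_swap_bwd (hS : IsLowerSet (↑S : Set (ℕ × ℕ))) (hr : r ∈ maxC S)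
    (hc : c ∈ (addC (S.erase r)).erase r) :
    c ∈ addC S ∧ r ∈ (maxC (insert c S)).erase c := by
  have hrS : r ∈ S := (mem_maxC.1 hr).1
  have hcr : c ≠ r := (Finset.mem_erase.1 hc).1
  have hcadd : c ∈ addC (S.erase r) := (Finset.mem_erase.1 hc).2
  have hcnotS : c ∉ S := by
    intro h
    exact (mem_addC.1 hcadd).1 (Finset.mem_erase.2 ⟨hcr, h⟩)
  have hTlower : IsLowerSet (↑(S.erase r) : Set (ℕ × ℕ)) := lower_erase hS hr
  have hrc : ¬ r ≤ c := by
    intro hle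
    have := cell_below_mem hTlower hcadd hle (fun he => hcr he.symm)
    exact (Finset.notMem_erase r S) this
  have hcS : c ∈ addC S := by
    rw [mem_addC]
    refine ⟨hcnotS, ?_⟩
    have hset : (↑(insert c S) : Set (ℕ × ℕ)) =
        (↑(insert c (S.erase r)) : Set (ℕ × ℕ)) ∪ (↑S : Set (ℕ × ℕ)) := by
      ext y
      simp only [Finset.coe_insert, Set.mem_insert_iff, Finset.mem_coe, Set.mem_union,
        Finset.mem_erase]
      constructor
      · rintro (rfl | h)
        · exact Or.inl (Or.inl rfl)
        · exact Or.inr h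
      · rintro ((rfl | ⟨_, h⟩) | h)
        · exact Or.inl rfl
        · exact Or.inr h
        · exact Or.inr h
    rw [hset]
    exact IsLowerSet.union (mem_addC.1 hcadd).2 hS
  refine ⟨hcS, Finset.mem_erase.2 ⟨fun he => hcr he.symm, ?_⟩⟩
  rw [mem_maxC]
  refine ⟨Finset.mem_insert_of_mem hrS, ?_⟩
  intro b hb hle
  rcases Finset.mem_insert.1 hb with rfl | hb
  · exact absurd hle hrc
  · exact (mem_maxC.1 hr).2 b hb hle

/-- the quadratic weight -/
def Fq (z z' : ℂ) (t : ℤ) : ℂ := (z + (t : ℂ)) * (z' + (t : ℂ))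

lemma telescope_quad (z z' : ℂ) (S : Finset (ℕ × ℕ)) (hS : IsLowerSet (↑S : Set (ℕ × ℕ))) :
    ∑ c ∈ addC S, Fq z z' (cont c)
      = (∑ r ∈ maxC S, Fq z z' (cont r)) + (z * z' + 2 * (S.card : ℂ)) := by
  have h := telescope (Fq z z') S hS
  have h2 : ∀ x : ℕ × ℕ, x ∈ S →
      Fq z z' (cont x + 1) + Fq z z' (cont x - 1) - 2 * Fq z z' (cont x) = 2 := by
    intro x _
    unfold Fq
    push_cast
    ring
  rw [Finset.sum_congr rfl h2, Finset.sum_const, nsmul_eq_mul] at h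
  have h0 : Fq z z' 0 = z * z' := by unfold Fq; push_cast; ring
  rw [h0] at h
  rw [h]
  ring

theorem keyLemma (z z' : ℂ) : ∀ S : Finset (ℕ × ℕ), IsLowerSet (↑S : Set (ℕ × ℕ)) →
    ∑ c ∈ addC S, Fq z z' (cont c) * (dimCells (insert c S) : ℂ)
      = ((S.card : ℂ) + 1) * (z * z' + (S.card : ℂ)) * (dimCells S : ℂ) := by
  intro S
  induction S using Finset.strongInduction with
  | _ S ih =>
  intro hS
  rcases S.eq_empty_or_nonempty with rfl | hne
  · rw [addC_empty]
    rw [Finset.sum_singleton]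
    have h1 : insert ((0,0) : ℕ × ℕ) ∅ = ({(0,0)} : Finset (ℕ × ℕ)) := rfl
    rw [h1, dim_singleton, dim_empty]
    unfold Fq cont
    push_cast
    simp
  · -- inductive step
    classical
    -- branch each inner dim
    have hbr : ∀ c ∈ addC S, (dimCells (insert c S) : ℂ)
        = (dimCells S : ℂ)
          + ∑ r ∈ (maxC (insert c S)).erase c, (dimCells (insert c (S.erase r)) : ℂ) := by
      intro c hc
      have hcnotS : c ∉ S := (mem_addC.1 hc).1
      have h1 : dimCells (insert c S) = ∑ r ∈ maxC (insert c S), dimCells ((insert c S).erase r) :=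
        dim_branch (Finset.insert_nonempty c S)
      have hcm : c ∈ maxC (insert c S) := addable_mem_maxC_insert hS hc
      have h2 : (dimCells (insert c S) : ℂ)
          = ∑ r ∈ maxC (insert c S), (dimCells ((insert c S).erase r) : ℂ) := by
        rw [h1]; push_cast; rfl
      rw [h2, ← Finset.add_sum_erase _ _ hcm, Finset.erase_insert hcnotS]
      congr 1
      refine Finset.sum_congr rfl ?_
      intro r hr
      rw [Finset.erase_insert_of_ne (fun he => (Finset.mem_erase.1 hr).1 he.symm)]
    rw [Finset.sum_congr rfl (fun c hc => by rw [hbr c hc])]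
    simp only [mul_add, Finset.sum_add_distrib]
    -- first piece
    have hfirst : ∑ c ∈ addC S, Fq z z' (cont c) * (dimCells S : ℂ)
        = ((∑ r ∈ maxC S, Fq z z' (cont r)) + (z * z' + 2 * (S.card : ℂ)))
          * (dimCells S : ℂ) := by
      rw [← Finset.sum_mul, telescope_quad z z' S hS]
    rw [hfirst]
    have hpull : ∑ c ∈ addC S, Fq z z' (cont c) * ∑ r ∈ (maxC (insert c S)).erase c,
          (dimCells (insert c (S.erase r)) : ℂ)
        = ∑ c ∈ addC S, ∑ r ∈ (maxC (insert c S)).erase c,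
          Fq z z' (cont c) * (dimCells (insert c (S.erase r)) : ℂ) :=
      Finset.sum_congr rfl (fun c _ => Finset.mul_sum _ _ _)
    rw [hpull]
    -- second piece : swap the double sum
    have hswap : ∑ c ∈ addC S, ∑ r ∈ (maxC (insert c S)).erase c,
          Fq z z' (cont c) * (dimCells (insert c (S.erase r)) : ℂ)
        = ∑ r ∈ maxC S, ∑ c ∈ (addC (S.erase r)).erase r,
          Fq z z' (cont c) * (dimCells (insert c (S.erase r)) : ℂ) := by
      rw [Finset.sum_sigma' (addC S) (fun c => (maxC (insert c S)).erase c)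
        (fun c r => Fq z z' (cont c) * (dimCells (insert c (S.erase r)) : ℂ))]
      rw [Finset.sum_sigma' (maxC S) (fun r => (addC (S.erase r)).erase r)
        (fun r c => Fq z z' (cont c) * (dimCells (insert c (S.erase r)) : ℂ))]
      refine Finset.sum_nbij' (fun p => ⟨p.2, p.1⟩) (fun q => ⟨q.2, q.1⟩) ?_ ?_ ?_ ?_ ?_
      · rintro ⟨c, r⟩ hp
        rw [Finset.mem_sigma] at hp ⊢
        exact pair_swap_fwd hS hp.1 hp.2
      · rintro ⟨r, c⟩ hq
        rw [Finset.mem_sigma] at hq ⊢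
        exact pair_swap_bwd hS hq.1 hq.2
      · rintro ⟨c, r⟩ _; rfl
      · rintro ⟨r, c⟩ _; rfl
      · rintro ⟨c, r⟩ _; rfl
    rw [hswap]
    -- inner sums via induction hypothesis
    have hinner : ∀ r ∈ maxC S, ∑ c ∈ (addC (S.erase r)).erase r,
          Fq z z' (cont c) * (dimCells (insert c (S.erase r)) : ℂ)
        = ((S.card : ℂ) - 1 + 1) * (z * z' + ((S.card : ℂ) - 1)) * (dimCells (S.erase r) : ℂ)
          - Fq z z' (cont r) * (dimCells S : ℂ) := by
      intro r hr
      have hrS : r ∈ S := (mem_maxC.1 hr).1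
      have hT : IsLowerSet (↑(S.erase r) : Set (ℕ × ℕ)) := lower_erase hS hr
      have hradd : r ∈ addC (S.erase r) := by
        rw [mem_addC]
        refine ⟨Finset.notMem_erase r S, ?_⟩
        rw [Finset.insert_erase hrS]
        exact hS
      rw [Finset.sum_erase_eq_sub hradd, ih (S.erase r) (Finset.erase_ssubset hrS) hT]
      have hcard : ((S.erase r).card : ℂ) = (S.card : ℂ) - 1 := by
        rw [Finset.card_erase_of_mem hrS]
        have : 0 < S.card := Finset.card_pos.2 hne
        push_cast [Nat.cast_sub (by omega : 1 ≤ S.card)]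
        ring
      rw [hcard, Finset.insert_erase hrS]
    rw [Finset.sum_congr rfl hinner]
    -- assemble
    rw [Finset.sum_sub_distrib]
    have hdim : ∑ r ∈ maxC S, ((S.card : ℂ) - 1 + 1) * (z * z' + ((S.card : ℂ) - 1))
          * (dimCells (S.erase r) : ℂ)
        = ((S.card : ℂ) - 1 + 1) * (z * z' + ((S.card : ℂ) - 1)) * (dimCells S : ℂ) := by
      rw [← Finset.mul_sum]
      congr 1
      rw [dim_branch hne]
      push_cast
      rfl
    rw [hdim, ← Finset.sum_mul]
    ring
section Dictionary

/- ---- small list lemmas ---- -/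

lemma getD_zero_of_all_zero {l : List ℕ} (h : ∀ x ∈ l, x = 0) (i : ℕ) : l.getD i 0 = 0 := by
  rcases Nat.lt_or_ge i l.length with hi | hi
  · rw [List.getD_eq_getElem _ _ hi]
    exact h _ (List.getElem_mem hi)
  · exact List.getD_eq_default _ _ hi

lemma sorted_getD_antitone {l : List ℕ} (h : l.Pairwise (· ≥ ·)) {i j : ℕ} (hij : i ≤ j) :
    l.getD j 0 ≤ l.getD i 0 := by
  rcases Nat.lt_or_ge j l.length with hj | hj
  · have hi : i < l.length := lt_of_le_of_lt hij hj
    rw [List.getD_eq_getElem _ _ hj, List.getD_eq_getElem _ _ hi]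
    rcases Nat.lt_or_ge i j with hlt | hge
    · exact List.pairwise_iff_get.1 h ⟨i, hi⟩ ⟨j, hj⟩ hlt
    · have hcast : i = j := le_antisymm hij hge
      subst hcast
      exact le_refl _
  · rw [List.getD_eq_default _ _ hj]
    exact Nat.zero_le _

lemma sum_range_getD : ∀ (l : List ℕ) (N : ℕ), l.length ≤ N →
    ∑ i ∈ Finset.range N, l.getD i 0 = l.sum := by
  intro l
  induction l with
  | nil =>
    intro N _
    simp
  | cons a t iht =>
    intro N hN
    have hN1 : 1 ≤ N := le_trans (Nat.succ_le_succ (Nat.zero_le _)) hN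
    obtain ⟨M, rfl⟩ : ∃ M, N = M + 1 := ⟨N - 1, by omega⟩
    rw [Finset.sum_range_succ']
    simp only [List.getD_cons_succ, List.getD_cons_zero]
    rw [iht M (by simpa using hN)]
    rw [List.sum_cons]
    ring

lemma getD_pos_iff {l : List ℕ} (hpos : ∀ x ∈ l, 0 < x) (i : ℕ) :
    0 < l.getD i 0 ↔ i < l.length := by
  constructor
  · intro h
    by_contra hc
    rw [List.getD_eq_default _ _ (by omega)] at h
    omega
  · intro h
    rw [List.getD_eq_getElem _ _ h]
    exact hpos _ (List.getElem_mem h)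

lemma getD_filter_ne : ∀ (l : List ℕ), l.Pairwise (· ≥ ·) → ∀ i : ℕ,
    (l.filter (fun x => x ≠ 0)).getD i 0 = l.getD i 0 := by
  intro l
  induction l with
  | nil => intro _ i; simp
  | cons a t iht =>
    intro h i
    rw [List.pairwise_cons] at h
    by_cases ha : a = 0
    · subst ha
      have htz : ∀ x ∈ t, x = 0 := fun x hx => Nat.le_zero.1 (h.1 x hx)
      have hfil : (0 :: t).filter (fun x => x ≠ 0) = [] := by
        rw [List.filter_eq_nil_iff]
        intro x hx
        rcases List.mem_cons.1 hx with rfl | hx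
        · simp
        · simp [htz x hx]
      rw [hfil]
      rw [show (List.getD [] i 0) = 0 from rfl]
      exact (getD_zero_of_all_zero (fun x hx => by
        rcases List.mem_cons.1 hx with rfl | hx
        · rfl
        · exact htz x hx) i).symm
    · have hfil : (a :: t).filter (fun x => x ≠ 0) = a :: t.filter (fun x => x ≠ 0) := by
        rw [List.filter_cons_of_pos (by simpa using ha)]
      rw [hfil]
      cases i with
      | zero => rfl
      | succ i =>
        rw [List.getD_cons_succ, List.getD_cons_succ]
        exact iht h.2 i

/- ---- partFun lemmas ---- -/

variable {n : ℕ} {ρ : Nat.Partition n}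

lemma partFun_sorted (ρ : Nat.Partition n) : (ρ.parts.sort (· ≥ ·)).Pairwise (· ≥ ·) :=
  Multiset.pairwise_sort _ _

lemma partFun_sum (ρ : Nat.Partition n) : (ρ.parts.sort (· ≥ ·)).sum = n := by
  have h : (↑(ρ.parts.sort (· ≥ ·)) : Multiset ℕ) = ρ.parts := Multiset.sort_eq _ _
  have := congrArg Multiset.sum h
  rw [Multiset.sum_coe] at this
  rw [this, ρ.parts_sum]

lemma partFun_length_le (ρ : Nat.Partition n) : (ρ.parts.sort (· ≥ ·)).length ≤ n := by
  rw [Multiset.length_sort]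
  have h := Multiset.card_nsmul_le_sum (s := ρ.parts) (a := 1)
    (fun x hx => ρ.parts_pos hx)
  rw [smul_eq_mul, mul_one, ρ.parts_sum] at h
  exact h

lemma partFun_antitone {i j : ℕ} (hij : i ≤ j) : partFun ρ j ≤ partFun ρ i :=
  sorted_getD_antitone (partFun_sorted ρ) hij

lemma partFun_le (i : ℕ) : partFun ρ i ≤ n := by
  unfold partFun
  rcases Nat.lt_or_ge i (ρ.parts.sort (· ≥ ·)).length with hi | hi
  · rw [List.getD_eq_getElem _ _ hi]
    have hmem : (ρ.parts.sort (· ≥ ·))[i] ∈ ρ.parts := by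
      rw [← Multiset.mem_sort (· ≥ ·)]
      exact List.getElem_mem hi
    have := Multiset.single_le_sum (fun x _ => Nat.zero_le x) _ hmem
    rwa [ρ.parts_sum] at this
  · rw [List.getD_eq_default _ _ hi]
    exact Nat.zero_le _

lemma partFun_pos_lt {i : ℕ} (h : 0 < partFun ρ i) : i < n := by
  unfold partFun at h
  have hlen : i < (ρ.parts.sort (· ≥ ·)).length := by
    by_contra hc
    rw [List.getD_eq_default _ _ (by omega)] at h
    omega
  exact lt_of_lt_of_le hlen (partFun_length_le ρ)

lemma mem_cellsOf {c : ℕ × ℕ} : c ∈ cellsOf ρ ↔ c.2 < partFun ρ c.1 := by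
  unfold cellsOf
  rw [Finset.mem_filter, Finset.mem_product, Finset.mem_range, Finset.mem_range]
  constructor
  · exact fun h => h.2
  · intro h
    refine ⟨⟨partFun_pos_lt (lt_of_le_of_lt (Nat.zero_le c.2) h), lt_of_lt_of_le h (partFun_le c.1)⟩, h⟩

lemma cellsOf_lower (ρ : Nat.Partition n) : IsLowerSet (↑(cellsOf ρ) : Set (ℕ × ℕ)) := by
  intro x y hyx hx
  rw [Finset.mem_coe, mem_cellsOf] at hx ⊢
  calc y.2 ≤ x.2 := hyx.2
    _ < partFun ρ x.1 := hx
    _ ≤ partFun ρ y.1 := partFun_antitone hyx.1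

lemma cellsOf_card (ρ : Nat.Partition n) : (cellsOf ρ).card = n := by
  classical
  have hbi : cellsOf ρ = (Finset.range n).biUnion
      (fun i => (Finset.range (partFun ρ i)).image (fun j => (i, j))) := by
    ext c
    rw [mem_cellsOf, Finset.mem_biUnion]
    constructor
    · intro h
      refine ⟨c.1, Finset.mem_range.2 (partFun_pos_lt (lt_of_le_of_lt (Nat.zero_le c.2) h)), ?_⟩
      rw [Finset.mem_image]
      exact ⟨c.2, Finset.mem_range.2 h, rfl⟩
    · rintro ⟨i, _, hmem⟩
      rw [Finset.mem_image] at hmem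
      obtain ⟨j, hj, rfl⟩ := hmem
      exact Finset.mem_range.1 hj
  rw [hbi, Finset.card_biUnion]
  · have hcarde : ∀ i, ((Finset.range (partFun ρ i)).image (fun j => (i, j))).card
        = partFun ρ i := by
      intro i
      rw [Finset.card_image_of_injective _ (fun a b hab => by
        simpa using congrArg Prod.snd hab), Finset.card_range]
    rw [Finset.sum_congr rfl (fun i _ => hcarde i)]
    simp only [partFun.eq_def]
    rw [sum_range_getD _ n (partFun_length_le ρ)]
    exact partFun_sum ρ
  · intro i _ j _ hij
    rw [Function.onFun, Finset.disjoint_left]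
    intro c hc hc'
    rw [Finset.mem_image] at hc hc'
    obtain ⟨_, _, rfl⟩ := hc
    obtain ⟨_, _, he⟩ := hc'
    exact hij (congrArg Prod.fst he).symm

lemma cellsOf_injective : Function.Injective (cellsOf : Nat.Partition n → Finset (ℕ × ℕ)) := by
  intro ρ σ h
  have hpf : ∀ i, partFun ρ i = partFun σ i := by
    intro i
    have hiff : ∀ j, j < partFun ρ i ↔ j < partFun σ i := by
      intro j
      constructor
      · intro hj
        have : ((i, j) : ℕ × ℕ) ∈ cellsOf ρ := mem_cellsOf.2 hj
        rw [h] at this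
        exact mem_cellsOf.1 this
      · intro hj
        have : ((i, j) : ℕ × ℕ) ∈ cellsOf σ := mem_cellsOf.2 hj
        rw [← h] at this
        exact mem_cellsOf.1 this
    have h1 := hiff (partFun ρ i)
    have h2 := hiff (partFun σ i)
    omega
  have hposρ : ∀ x ∈ ρ.parts.sort (· ≥ ·), 0 < x := by
    intro x hx
    exact ρ.parts_pos ((Multiset.mem_sort _).1 hx)
  have hposσ : ∀ x ∈ σ.parts.sort (· ≥ ·), 0 < x := by
    intro x hx
    exact σ.parts_pos ((Multiset.mem_sort _).1 hx)
  have hlen : (ρ.parts.sort (· ≥ ·)).length = (σ.parts.sort (· ≥ ·)).length := by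
    have h1 : ∀ i, i < (ρ.parts.sort (· ≥ ·)).length ↔ i < (σ.parts.sort (· ≥ ·)).length := by
      intro i
      rw [← getD_pos_iff hposρ, ← getD_pos_iff hposσ]
      unfold partFun at hpf
      rw [hpf i]
    have ha := h1 (ρ.parts.sort (· ≥ ·)).length
    have hb := h1 (σ.parts.sort (· ≥ ·)).length
    omega
  have hlist : ρ.parts.sort (· ≥ ·) = σ.parts.sort (· ≥ ·) := by
    apply List.ext_get hlen
    intro i h1 h2
    have := hpf i
    unfold partFun at this
    rwa [List.getD_eq_getElem _ _ h1, List.getD_eq_getElem _ _ h2] at this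
  apply Nat.Partition.ext
  calc ρ.parts = ↑(ρ.parts.sort (· ≥ ·)) := (Multiset.sort_eq _ _).symm
    _ = ↑(σ.parts.sort (· ≥ ·)) := by rw [hlist]
    _ = σ.parts := Multiset.sort_eq _ _

end Dictionary
section ToPart

variable {S : Finset (ℕ × ℕ)}

/-- length of row `i` -/
def rowLen (S : Finset (ℕ × ℕ)) (i : ℕ) : ℕ := (S.filter (fun c => c.1 = i)).card

lemma nat_lower_mem_iff {T : Finset ℕ} (h : ∀ j ∈ T, ∀ k, k ≤ j → k ∈ T) {j : ℕ} :
    j ∈ T ↔ j < T.card := by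
  constructor
  · intro hj
    have hsub : Finset.range (j + 1) ⊆ T := by
      intro k hk
      exact h j hj k (by simpa using Nat.lt_succ_iff.1 (Finset.mem_range.1 hk))
    have := Finset.card_le_card hsub
    rw [Finset.card_range] at this
    omega
  · intro hj
    by_contra hc
    have hsub : T ⊆ Finset.range j := by
      intro t ht
      rw [Finset.mem_range]
      rcases Nat.lt_or_ge t j with h' | h'
      · exact h'
      · exact absurd (h t ht j h') hc
    have := Finset.card_le_card hsub
    rw [Finset.card_range] at this
    omega

lemma mem_row_iff (hS : IsLowerSet (↑S : Set (ℕ × ℕ))) {i j : ℕ} :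
    (i, j) ∈ S ↔ j < rowLen S i := by
  classical
  have hT : ∀ k, k ∈ (S.filter (fun c => c.1 = i)).image Prod.snd ↔ (i, k) ∈ S := by
    intro k
    rw [Finset.mem_image]
    constructor
    · rintro ⟨c, hc, rfl⟩
      rw [Finset.mem_filter] at hc
      have he : c = (i, c.2) := Prod.ext hc.2 rfl
      rw [← he]
      exact hc.1
    · intro hk
      exact ⟨(i, k), Finset.mem_filter.2 ⟨hk, rfl⟩, rfl⟩
  have hcard : ((S.filter (fun c => c.1 = i)).image Prod.snd).card = rowLen S i := by
    rw [rowLen]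
    apply Finset.card_image_of_injOn
    intro a ha b hb hab
    rw [Finset.mem_coe, Finset.mem_filter] at ha hb
    exact Prod.ext (ha.2.trans hb.2.symm) hab
  rw [← hT, nat_lower_mem_iff, hcard]
  intro j' hj' k hk
  rw [hT] at hj' ⊢
  exact hS (⟨le_rfl, hk⟩ : ((i,k) : ℕ × ℕ) ≤ (i, j')) hj'

lemma rowLen_antitone (hS : IsLowerSet (↑S : Set (ℕ × ℕ))) {i i' : ℕ} (h : i ≤ i') :
    rowLen S i' ≤ rowLen S i := by
  rcases Nat.eq_zero_or_pos (rowLen S i') with h0 | h0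
  · omega
  · have hmem : (i', rowLen S i' - 1) ∈ S := (mem_row_iff hS).2 (by omega)
    have hmem' : (i, rowLen S i' - 1) ∈ S :=
      hS (⟨h, le_rfl⟩ : ((i, rowLen S i' - 1) : ℕ × ℕ) ≤ (i', rowLen S i' - 1)) hmem
    have := (mem_row_iff hS).1 hmem'
    omega

lemma rowLen_zero_of_ge (hS : IsLowerSet (↑S : Set (ℕ × ℕ))) {i : ℕ} (h : S.card ≤ i) :
    rowLen S i = 0 := by
  by_contra hc
  have hmem : (i, 0) ∈ S := (mem_row_iff hS).2 (by omega)
  have hsub : (Finset.range (i + 1)).image (fun k => (k, 0)) ⊆ S := by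
    intro x hx
    rw [Finset.mem_image] at hx
    obtain ⟨k, hk, rfl⟩ := hx
    exact hS (⟨Nat.lt_succ_iff.1 (Finset.mem_range.1 hk), le_rfl⟩ :
      ((k, 0) : ℕ × ℕ) ≤ (i, 0)) hmem
  have hle := Finset.card_le_card hsub
  rw [Finset.card_image_of_injective _ (fun a b hab => by simpa using congrArg Prod.fst hab),
    Finset.card_range] at hle
  omega

lemma sum_rowLen (hS : IsLowerSet (↑S : Set (ℕ × ℕ))) :
    ∑ i ∈ Finset.range S.card, rowLen S i = S.card := by
  classical
  have hbi : S = (Finset.range S.card).biUnion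
      (fun i => (S.filter (fun c => c.1 = i))) := by
    ext c
    rw [Finset.mem_biUnion]
    constructor
    · intro hc
      refine ⟨c.1, Finset.mem_range.2 ?_, Finset.mem_filter.2 ⟨hc, rfl⟩⟩
      by_contra h
      have := rowLen_zero_of_ge hS (by omega : S.card ≤ c.1)
      have hmem : (c.1, c.2) ∈ S := by rwa [Prod.mk.eta]
      have := (mem_row_iff hS).1 hmem
      omega
    · rintro ⟨i, _, hc⟩
      exact (Finset.mem_filter.1 hc).1
  conv_rhs => rw [hbi]
  rw [Finset.card_biUnion]
  · rfl
  · intro i _ j _ hij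
    rw [Function.onFun, Finset.disjoint_left]
    intro c hc hc'
    rw [Finset.mem_filter] at hc hc'
    exact hij (hc.2.symm.trans hc'.2)

/-- the partition associated with a lower set -/
def toPart (S : Finset (ℕ × ℕ)) (hS : IsLowerSet (↑S : Set (ℕ × ℕ))) : Nat.Partition S.card where
  parts := (Multiset.map (rowLen S) (Multiset.range S.card)).filter (fun x => x ≠ 0)
  parts_pos := by
    intro i hi
    rw [Multiset.mem_filter] at hi
    omega
  parts_sum := by
    classical
    have h1 : (Multiset.filter (fun x => x ≠ 0)
          (Multiset.map (rowLen S) (Multiset.range S.card))).sum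
        + (Multiset.filter (fun x => ¬ x ≠ 0)
          (Multiset.map (rowLen S) (Multiset.range S.card))).sum
        = (Multiset.map (rowLen S) (Multiset.range S.card)).sum :=
      Multiset.sum_filter_add_sum_filter_not (fun x => x ≠ 0)
    have h2 : (Multiset.filter (fun x => ¬ x ≠ 0)
        (Multiset.map (rowLen S) (Multiset.range S.card))).sum = 0 := by
      apply Multiset.sum_eq_zero
      intro x hx
      rw [Multiset.mem_filter] at hx
      omega
    have h3 : (Multiset.map (rowLen S) (Multiset.range S.card)).sum
        = ∑ i ∈ Finset.range S.card, rowLen S i := rfl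
    rw [h2, add_zero] at h1
    rw [h1, h3, sum_rowLen hS]

lemma toPart_sorted_list (hS : IsLowerSet (↑S : Set (ℕ × ℕ))) :
    (toPart S hS).parts.sort (· ≥ ·)
      = ((List.range S.card).map (rowLen S)).filter (fun x => x ≠ 0) := by
  classical
  have hL0sorted : ((List.range S.card).map (rowLen S)).Pairwise (· ≥ ·) := by
    rw [List.pairwise_iff_get]
    intro i j hij
    simp only [List.get_eq_getElem, List.getElem_map, List.getElem_range]
    exact rowLen_antitone hS (le_of_lt (by simpa using hij))
  have hLsorted : (((List.range S.card).map (rowLen S)).filter (fun x => x ≠ 0)).Pairwise (· ≥ ·) :=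
    hL0sorted.filter _
  have hperm : ((toPart S hS).parts.sort (· ≥ ·)).Perm
      (((List.range S.card).map (rowLen S)).filter (fun x => x ≠ 0)) := by
    rw [← Multiset.coe_eq_coe, Multiset.sort_eq]
    show (toPart S hS).parts = _
    rw [show (toPart S hS).parts
      = (Multiset.map (rowLen S) (Multiset.range S.card)).filter (fun x => x ≠ 0) from rfl]
    rw [Multiset.range]
    rw [Multiset.map_coe, Multiset.filter_coe]
  exact List.Perm.eq_of_pairwise' (Multiset.pairwise_sort _ _) hLsorted hperm

lemma partFun_toPart (hS : IsLowerSet (↑S : Set (ℕ × ℕ))) (i : ℕ) :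
    partFun (toPart S hS) i = rowLen S i := by
  classical
  rw [partFun, toPart_sorted_list hS]
  have hL0sorted : ((List.range S.card).map (rowLen S)).Pairwise (· ≥ ·) := by
    rw [List.pairwise_iff_get]
    intro a b hab
    simp only [List.get_eq_getElem, List.getElem_map, List.getElem_range]
    exact rowLen_antitone hS (le_of_lt (by simpa using hab))
  rw [getD_filter_ne _ hL0sorted i]
  rcases Nat.lt_or_ge i S.card with hi | hi
  · rw [List.getD_eq_getElem _ _ (by simpa using hi)]
    simp
  · rw [List.getD_eq_default _ _ (by simpa using hi)]
    exact (rowLen_zero_of_ge hS hi).symm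

lemma cellsOf_toPart (hS : IsLowerSet (↑S : Set (ℕ × ℕ))) :
    cellsOf (toPart S hS) = S := by
  ext c
  rw [mem_cellsOf, partFun_toPart hS]
  rw [show c = (c.1, c.2) from rfl]
  exact (mem_row_iff hS).symm

end ToPart
section Assembly

/-- product of shifted contents over a cell set -/
noncomputable def pochCells (x : ℂ) (T : Finset (ℕ × ℕ)) : ℂ :=
  ∏ c ∈ T, (x + (cont c : ℂ))

lemma pochPartition_eq {n : ℕ} (x : ℂ) (ρ : Nat.Partition n) :
    pochPartition x ρ = pochCells x (cellsOf ρ) := by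
  unfold pochPartition pochCells
  refine Finset.prod_congr rfl ?_
  intro c _
  unfold cont
  push_cast
  ring

lemma pochCells_insert (x : ℂ) {T : Finset (ℕ × ℕ)} {c : ℕ × ℕ} (hc : c ∉ T) :
    pochCells x (insert c T) = (x + (cont c : ℂ)) * pochCells x T :=
  Finset.prod_insert hc

/-- transport of `toPart` along a cardinality identification -/
def toPartN (S : Finset (ℕ × ℕ)) (hS : IsLowerSet (↑S : Set (ℕ × ℕ))) (m : ℕ)
    (h : S.card = m) : Nat.Partition m := h ▸ toPart S hS

lemma cellsOf_toPartN (S : Finset (ℕ × ℕ)) (hS : IsLowerSet (↑S : Set (ℕ × ℕ))) (m : ℕ)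
    (h : S.card = m) : cellsOf (toPartN S hS m h) = S := by
  subst h
  exact cellsOf_toPart hS

lemma sigma_eq_of_cellsOf {m : ℕ} {μ ν : Nat.Partition m} {c : ℕ × ℕ}
    (h : cellsOf μ = cellsOf ν) :
    (⟨μ, c⟩ : Σ _ : Nat.Partition m, ℕ × ℕ) = ⟨ν, c⟩ := by
  rw [cellsOf_injective h]

theorem main_rec (z z' : ℂ) (n : ℕ) :
    (∑ ρ : Nat.Partition (n + 1), pochCells z (cellsOf ρ) * pochCells z' (cellsOf ρ)
        * (dimCells (cellsOf ρ) : ℂ) ^ 2)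
      = ((n : ℂ) + 1) * (z * z' + (n : ℂ))
        * ∑ μ : Nat.Partition n, pochCells z (cellsOf μ) * pochCells z' (cellsOf μ)
          * (dimCells (cellsOf μ) : ℂ) ^ 2 := by
  classical
  set g : Finset (ℕ × ℕ) → (ℕ × ℕ) → ℂ := fun T c =>
    Fq z z' (cont c) * pochCells z T * pochCells z' T
      * (dimCells (insert c T) : ℂ) * (dimCells T : ℂ) with hg
  -- step 1 : expand each summand along its corners
  have hstep : ∀ ρ : Nat.Partition (n + 1),
      pochCells z (cellsOf ρ) * pochCells z' (cellsOf ρ) * (dimCells (cellsOf ρ) : ℂ) ^ 2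
        = ∑ r ∈ maxC (cellsOf ρ), g ((cellsOf ρ).erase r) r := by
    intro ρ
    have hcard := cellsOf_card ρ
    have hne : (cellsOf ρ).Nonempty := Finset.card_pos.1 (by rw [hcard]; omega)
    have hexp : (dimCells (cellsOf ρ) : ℂ)
        = ∑ r ∈ maxC (cellsOf ρ), (dimCells ((cellsOf ρ).erase r) : ℂ) := by
      rw [dim_branch hne]; push_cast; rfl
    have h1 : pochCells z (cellsOf ρ) * pochCells z' (cellsOf ρ)
          * (dimCells (cellsOf ρ) : ℂ) ^ 2
        = ∑ r ∈ maxC (cellsOf ρ), pochCells z (cellsOf ρ) * pochCells z' (cellsOf ρ)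
          * (dimCells (cellsOf ρ) : ℂ) * (dimCells ((cellsOf ρ).erase r) : ℂ) := by
      rw [← Finset.mul_sum, ← hexp]
      ring
    rw [h1]
    refine Finset.sum_congr rfl ?_
    intro r hr
    have hrS : r ∈ cellsOf ρ := (mem_maxC.1 hr).1
    have hins : insert r ((cellsOf ρ).erase r) = cellsOf ρ := Finset.insert_erase hrS
    have hz : pochCells z (cellsOf ρ)
        = (z + (cont r : ℂ)) * pochCells z ((cellsOf ρ).erase r) := by
      rw [← hins, pochCells_insert z (Finset.notMem_erase r _), hins]
    have hz' : pochCells z' (cellsOf ρ)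
        = (z' + (cont r : ℂ)) * pochCells z' ((cellsOf ρ).erase r) := by
      rw [← hins, pochCells_insert z' (Finset.notMem_erase r _), hins]
    have hgr : g ((cellsOf ρ).erase r) r
        = pochCells z (cellsOf ρ) * pochCells z' (cellsOf ρ)
          * (dimCells (cellsOf ρ) : ℂ) * (dimCells ((cellsOf ρ).erase r) : ℂ) := by
      simp only [hg]
      rw [hins, hz, hz']
      unfold Fq
      ring
    exact hgr.symm
  rw [Finset.sum_congr rfl (fun ρ _ => hstep ρ)]
  -- step 2 : swap the double sum via the partition/diagram dictionary
  have hswap : (∑ ρ : Nat.Partition (n + 1), ∑ r ∈ maxC (cellsOf ρ), g ((cellsOf ρ).erase r) r)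
      = ∑ μ : Nat.Partition n, ∑ c ∈ addC (cellsOf μ), g (cellsOf μ) c := by
    rw [Finset.sum_sigma' Finset.univ (fun ρ : Nat.Partition (n+1) => maxC (cellsOf ρ))
      (fun ρ r => g ((cellsOf ρ).erase r) r)]
    rw [Finset.sum_sigma' Finset.univ (fun μ : Nat.Partition n => addC (cellsOf μ))
      (fun μ c => g (cellsOf μ) c)]
    refine Finset.sum_bij'
      (fun p hp => ⟨toPartN ((cellsOf p.1).erase p.2)
          (lower_erase (cellsOf_lower p.1) ((Finset.mem_sigma.1 hp).2)) n
          (by rw [Finset.card_erase_of_mem (mem_maxC.1 (Finset.mem_sigma.1 hp).2).1,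
            cellsOf_card]; omega), p.2⟩)
      (fun q hq => ⟨toPartN (insert q.2 (cellsOf q.1))
          (mem_addC.1 ((Finset.mem_sigma.1 hq).2)).2 (n + 1)
          (by rw [Finset.card_insert_of_notMem (mem_addC.1 ((Finset.mem_sigma.1 hq).2)).1,
            cellsOf_card]), q.2⟩)
      ?_ ?_ ?_ ?_ ?_
    · -- forward membership
      rintro ⟨ρ, r⟩ hp
      rw [Finset.mem_sigma]
      refine ⟨Finset.mem_univ _, ?_⟩
      rw [cellsOf_toPartN]
      have hr := (Finset.mem_sigma.1 hp).2
      have hrS : r ∈ cellsOf ρ := (mem_maxC.1 hr).1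
      rw [mem_addC]
      refine ⟨Finset.notMem_erase r _, ?_⟩
      rw [Finset.insert_erase hrS]
      exact cellsOf_lower ρ
    · -- backward membership
      rintro ⟨μ, c⟩ hq
      rw [Finset.mem_sigma]
      refine ⟨Finset.mem_univ _, ?_⟩
      rw [cellsOf_toPartN]
      exact addable_mem_maxC_insert (cellsOf_lower μ) ((Finset.mem_sigma.1 hq).2)
    · -- left inverse
      rintro ⟨ρ, r⟩ hp
      have hr := (Finset.mem_sigma.1 hp).2
      have hrS : r ∈ cellsOf ρ := (mem_maxC.1 hr).1
      apply sigma_eq_of_cellsOf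
      rw [cellsOf_toPartN, cellsOf_toPartN, Finset.insert_erase hrS]
    · -- right inverse
      rintro ⟨μ, c⟩ hq
      have hc := (Finset.mem_sigma.1 hq).2
      have hcnot : c ∉ cellsOf μ := (mem_addC.1 hc).1
      apply sigma_eq_of_cellsOf
      rw [cellsOf_toPartN, cellsOf_toPartN, Finset.erase_insert hcnot]
    · -- values agree
      rintro ⟨ρ, r⟩ hp
      show g ((cellsOf ρ).erase r) r = g (cellsOf (toPartN _ _ _ _)) r
      rw [cellsOf_toPartN]
  rw [hswap]
  -- step 3 : evaluate the inner sums by the key lemma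
  have hinner : ∀ μ : Nat.Partition n, ∑ c ∈ addC (cellsOf μ), g (cellsOf μ) c
      = ((n : ℂ) + 1) * (z * z' + (n : ℂ))
        * (pochCells z (cellsOf μ) * pochCells z' (cellsOf μ)
          * (dimCells (cellsOf μ) : ℂ) ^ 2) := by
    intro μ
    have hterm : ∀ c ∈ addC (cellsOf μ), g (cellsOf μ) c
        = (pochCells z (cellsOf μ) * pochCells z' (cellsOf μ) * (dimCells (cellsOf μ) : ℂ))
          * (Fq z z' (cont c) * (dimCells (insert c (cellsOf μ)) : ℂ)) := by
      intro c _
      simp only [hg]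
      ring
    rw [Finset.sum_congr rfl hterm, ← Finset.mul_sum,
      keyLemma z z' (cellsOf μ) (cellsOf_lower μ), cellsOf_card]
    ring
  rw [Finset.sum_congr rfl (fun μ _ => hinner μ), ← Finset.mul_sum]

theorem main_formula (z z' : ℂ) (n : ℕ) :
    (∑ ρ : Nat.Partition n, pochCells z (cellsOf ρ) * pochCells z' (cellsOf ρ)
        * (dimCells (cellsOf ρ) : ℂ) ^ 2)
      = (∏ i ∈ Finset.range n, (z * z' + (i : ℂ))) * (n.factorial : ℂ) := by
  induction n with
  | zero =>
    have hcells : ∀ ρ : Nat.Partition 0, cellsOf ρ = ∅ := by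
      intro ρ
      unfold cellsOf
      simp
    have hone : ∀ ρ : Nat.Partition 0, pochCells z (cellsOf ρ) * pochCells z' (cellsOf ρ)
        * (dimCells (cellsOf ρ) : ℂ) ^ 2 = 1 := by
      intro ρ
      rw [hcells ρ]
      rw [show pochCells z ∅ = 1 from Finset.prod_empty,
        show pochCells z' ∅ = 1 from Finset.prod_empty, dim_empty]
      norm_num
    rw [Finset.sum_congr rfl (fun ρ _ => hone ρ), Finset.sum_const]
    have : (Finset.univ : Finset (Nat.Partition 0)).card = 1 := by
      rw [Finset.card_univ]
      exact Fintype.card_unique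
    rw [this]
    simp
  | succ n ihn =>
    rw [main_rec z z' n, ihn, Finset.prod_range_succ, Nat.factorial_succ]
    push_cast
    ring

end Assembly

/-- The identity `∑_{λ ⊢ n} (z)_λ (z′)_λ (dim λ)² = (zz′)_n · n!`. -/
theorem z_measure_identity (n : ℕ) (hn : 1 ≤ n) (z z' : ℂ) :
    ∑ ρ : Nat.Partition n, pochPartition z ρ * pochPartition z' ρ * (dimP ρ : ℂ) ^ 2
      = (∏ i ∈ Finset.range n, (z * z' + i)) * n.factorial := by
  have h := main_formula z z' n
  rw [← h]
  refine Finset.sum_congr rfl ?_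
  intro ρ _
  rw [pochPartition_eq, pochPartition_eq]
  rfl
end KeyLemma
end
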